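/- arXiv:2602.05831 — 9 statements merged into one kernel-verified Lean document; each statement's English description precedes it below -/
import Mathlib

section
/- Let S ⊂ ℤ^n be a realizable set and let (Ĝ, Ŵ) be its canonical realization. Then Ĝ is connected. -/
/-- A finite set `S ⊂ ℤ^n` is realizable if: (1) every `x ∈ S` has nonnegative
coordinates with at most one coordinate equal to zero; (2) for every `i` there is
exactly one `x ∈ S` with `x i = 0`; (3) if `x ∈ S` and `x i > 0` then there is
`y ∈ S` with `y i = x i - 1` and `max_j |y j - x j| ≤ 1`. -/
def Realizable {n : ℕ} (S : Finset (Fin n → ℤ)) : Prop :=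
  (∀ x ∈ S, (∀ i, 0 ≤ x i) ∧ ∀ i j, x i = 0 → x j = 0 → i = j) ∧
  (∀ i : Fin n, ∃! x, x ∈ S ∧ x i = 0) ∧
  (∀ x ∈ S, ∀ i : Fin n, 0 < x i →
    ∃ y ∈ S, y i = x i - 1 ∧ ∀ j, |y j - x j| ≤ 1)

/-- `max_{i ∈ [n]} |x i - y i| = 1`. -/
def maxDiffOne {n : ℕ} (x y : Fin n → ℤ) : Prop :=
  (∀ i, |x i - y i| ≤ 1) ∧ ∃ i, |x i - y i| = 1

/-- The canonical realization `Ĝ` of `S`: vertex set `S`, edges `xy` iff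
`max_i |x i - y i| = 1`. -/
def canonicalGraph {n : ℕ} (S : Finset (Fin n → ℤ)) : SimpleGraph {x // x ∈ S} where
  Adj x y := maxDiffOne x.1 y.1
  symm := by
    constructor
    rintro x y ⟨h1, i, hi⟩
    exact ⟨fun j => by rw [abs_sub_comm]; exact h1 j, i, by rwa [abs_sub_comm]⟩
  loopless := by
    constructor
    rintro x ⟨-, i, hi⟩
    simp at hi

/-- `(G, W)` is a realization of `S` (with `V(G) = S`): `G` is connected and for
every `u ∈ S` and every `ω ∈ S` with `ω i = 0` (i.e. `ω = ω^i ∈ W`),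
`d_G(u, ω) = u i`. -/
def IsRealization {n : ℕ} (S : Finset (Fin n → ℤ)) (G : SimpleGraph {x // x ∈ S}) : Prop :=
  G.Connected ∧
  ∀ (u w : {x // x ∈ S}) (i : Fin n), w.1 i = 0 → (G.dist u w : ℤ) = u.1 i

/-- if `S ⊂ ℤ^n` is realizable then its canonical realization `Ĝ`
is connected. -/
theorem canonicalGraph_connected {n : ℕ} (hn : 0 < n) (S : Finset (Fin n → ℤ))
    (hS : Realizable S) : (canonicalGraph S).Connected := by
  set i0 : Fin n := ⟨0, hn⟩
  obtain ⟨w, ⟨hwS, hw0⟩, hwuniq⟩ := hS.2.1 i0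
  have key : ∀ k : ℕ, ∀ x, ∀ hx : x ∈ S, x i0 = (k : ℤ) →
      (canonicalGraph S).Reachable ⟨x, hx⟩ ⟨w, hwS⟩ := by
    intro k
    induction k with
    | zero =>
      intro x hx h0
      have : x = w := hwuniq x ⟨hx, by exact_mod_cast h0⟩
      subst this
      exact SimpleGraph.Reachable.refl _
    | succ k ih =>
      intro x hx h0
      have hpos : 0 < x i0 := by rw [h0]; positivity
      obtain ⟨y, hyS, hyi, hyd⟩ := hS.2.2 x hx i0 hpos
      have hyk : y i0 = (k : ℤ) := by rw [hyi, h0]; push_cast; ring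
      have hadj : (canonicalGraph S).Adj ⟨x, hx⟩ ⟨y, hyS⟩ := by
        refine ⟨fun j => by rw [abs_sub_comm]; exact hyd j, i0, ?_⟩
        show |x i0 - y i0| = 1
        rw [hyi]; simp
      exact hadj.toWalk.reachable.trans (ih y hyS hyk)
  have hne : Nonempty {x // x ∈ S} := ⟨⟨w, hwS⟩⟩
  refine SimpleGraph.Connected.mk ?_
  intro u v
  have hu := key (u.1 i0).toNat u.1 u.2 (by
    rw [Int.toNat_of_nonneg ((hS.1 u.1 u.2).1 i0)])
  have hv := key (v.1 i0).toNat v.1 v.2 (by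
    rw [Int.toNat_of_nonneg ((hS.1 v.1 v.2).1 i0)])
  exact hu.trans hv.symm
end

section
/- Let S ⊂ ℤ^n be a realizable set and (Ĝ, Ŵ) its canonical realization, where Ŵ = {ω^1, …, ω^n} with ω^i the unique element whose i-th coordinate is 0. Then for every x ∈ S and every i ∈ [n], the graph distance d_Ĝ(x, ω^i) equals x_i. -/
lemma canonical_walk_lb {n : ℕ} {S : Finset (Fin n → ℤ)} (i : Fin n)
    {a b : {x // x ∈ S}} (p : (canonicalGraph S).Walk a b) :
    a.1 i - b.1 i ≤ (p.length : ℤ) := by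
  induction p with
  | nil => simp
  | cons h p ih =>
    have h1 := h.1 i
    have := abs_le.mp h1
    simp only [SimpleGraph.Walk.length_cons]
    push_cast
    omega

lemma canonical_walk_ub {n : ℕ} {S : Finset (Fin n → ℤ)} (hS : Realizable S)
    (w : {x // x ∈ S}) (i : Fin n) (hw : w.1 i = 0) :
    ∀ m : ℕ, ∀ x : {v // v ∈ S}, x.1 i = (m : ℤ) →
      ∃ p : (canonicalGraph S).Walk x w, p.length = m := by
  intro m
  induction m with
  | zero =>
    intro x hx
    obtain ⟨u, -, hu⟩ := hS.2.1 i
    have hxw : x = w := by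
      have h1 := hu x.1 ⟨x.2, by exact_mod_cast hx⟩
      have h2 := hu w.1 ⟨w.2, hw⟩
      exact Subtype.ext (h1.trans h2.symm)
    exact ⟨hxw ▸ SimpleGraph.Walk.nil, by subst hxw; rfl⟩
  | succ m ih =>
    intro x hx
    obtain ⟨y, hyS, hyi, hyd⟩ := hS.2.2 x.1 x.2 i (by rw [hx]; positivity)
    have hadj : (canonicalGraph S).Adj x ⟨y, hyS⟩ := by
      refine ⟨fun j => by rw [abs_sub_comm]; exact hyd j, i, ?_⟩
      show |x.1 i - y i| = 1; rw [hyi]; simp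
    obtain ⟨p, hp⟩ := ih ⟨y, hyS⟩ (by show y i = (m:ℤ); rw [hyi, hx]; push_cast; ring)
    exact ⟨SimpleGraph.Walk.cons hadj p, by simp [hp]⟩

/-- in the canonical realization of a realizable set `S`, the
distance from any `x ∈ S` to the vertex `ω^i` (the element of `S` with `i`-th
coordinate `0`) equals `x i`. -/
theorem canonicalGraph_dist {n : ℕ} (S : Finset (Fin n → ℤ)) (hS : Realizable S)
    (x w : {v // v ∈ S}) (i : Fin n) (hw : w.1 i = 0) :
    ((canonicalGraph S).dist x w : ℤ) = x.1 i := by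
  have hnn : 0 ≤ x.1 i := ((hS.1 x.1 x.2).1 i)
  obtain ⟨m, hm⟩ := Int.eq_ofNat_of_zero_le hnn
  obtain ⟨p, hp⟩ := canonical_walk_ub hS w i hw m x hm
  have hub : (canonicalGraph S).dist x w ≤ m := hp ▸ SimpleGraph.dist_le p
  have hreach : (canonicalGraph S).Reachable x w := ⟨p⟩
  obtain ⟨q, hq⟩ := hreach.exists_walk_length_eq_dist
  have hlb := canonical_walk_lb i q
  rw [hw, hq] at hlb
  omega
end

section
/- Let S ⊂ ℤ^n be a realizable set and (Ĝ, Ŵ) its canonical realization. Then Ŵ is a resolving set of Ĝ, i.e., for any two distinct vertices x, y ∈ S there exists ω ∈ Ŵ with d_Ĝ(x, ω) ≠ d_Ĝ(y, ω). -/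
lemma walk_coord_le {n : ℕ} {S : Finset (Fin n → ℤ)} {a b : {x // x ∈ S}} (i : Fin n)
    (p : (canonicalGraph S).Walk a b) : |a.1 i - b.1 i| ≤ (p.length : ℤ) := by
  induction p with
  | nil => simp
  | cons h p ih =>
    rename_i u v w
    have h1 : |u.1 i - v.1 i| ≤ 1 := h.1 i
    calc |u.1 i - w.1 i| ≤ |u.1 i - v.1 i| + |v.1 i - w.1 i| := abs_sub_le _ _ _
      _ ≤ 1 + p.length := add_le_add h1 ih
      _ = ((p.length + 1 : ℕ) : ℤ) := by push_cast; ring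
      _ = _ := by simp

lemma exists_walk {n : ℕ} {S : Finset (Fin n → ℤ)} (hS : Realizable S)
    (u w : {x // x ∈ S}) (i : Fin n) (hw : w.1 i = 0) :
    ∃ p : (canonicalGraph S).Walk u w, (p.length : ℤ) = u.1 i := by
  obtain ⟨h1, h2, h3⟩ := hS
  have hnn : 0 ≤ u.1 i := (h1 u.1 u.2).1 i
  obtain ⟨k, hk⟩ := Int.eq_ofNat_of_zero_le hnn
  clear hnn
  induction k generalizing u with
  | zero =>
    have : u = w := by
      obtain ⟨z, hz, huniq⟩ := h2 i
      have e1 := huniq u.1 ⟨u.2, by omega⟩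
      have e2 := huniq w.1 ⟨w.2, hw⟩
      exact Subtype.ext (e1.trans e2.symm)
    subst this
    exact ⟨SimpleGraph.Walk.nil, by simp; omega⟩
  | succ k ih =>
    obtain ⟨y, hyS, hyi, hyd⟩ := h3 u.1 u.2 i (by omega)
    have hcoe : (⟨y, hyS⟩ : {x // x ∈ S}).1 i = y i := rfl
    have hadj : (canonicalGraph S).Adj u ⟨y, hyS⟩ :=
      ⟨fun j => by rw [abs_sub_comm]; exact hyd j, i,
        by rw [abs_sub_comm]; show |y i - u.1 i| = 1; rw [abs_eq (by omega : (0:ℤ) ≤ 1)]; omega⟩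
    obtain ⟨p, hp⟩ := ih ⟨y, hyS⟩ (by rw [hcoe]; omega)
    exact ⟨SimpleGraph.Walk.cons hadj p, by simp; rw [hcoe] at hp; omega⟩

lemma dist_eq_coord {n : ℕ} {S : Finset (Fin n → ℤ)} (hS : Realizable S)
    (u w : {x // x ∈ S}) (i : Fin n) (hw : w.1 i = 0) :
    ((canonicalGraph S).dist u w : ℤ) = u.1 i := by
  obtain ⟨p, hp⟩ := exists_walk hS u w i hw
  have hr : (canonicalGraph S).Reachable u w := ⟨p⟩
  have hub : (canonicalGraph S).dist u w ≤ p.length := SimpleGraph.dist_le p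
  obtain ⟨q, hq⟩ := hr.exists_walk_length_eq_dist
  have hlb := walk_coord_le i q
  rw [hw] at hlb
  rw [hq] at hlb
  have := abs_le.mp hlb
  omega

/-- `Ŵ = {x ∈ S : some coordinate of x is 0}` is a resolving set of
the canonical realization `Ĝ`: any two distinct vertices are resolved by some
vertex of `Ŵ`. -/
theorem canonicalGraph_resolving {n : ℕ} (S : Finset (Fin n → ℤ)) (hS : Realizable S)
    (x y : {v // v ∈ S}) (hxy : x ≠ y) :
    ∃ w : {v // v ∈ S}, (∃ i : Fin n, w.1 i = 0) ∧
      (canonicalGraph S).dist x w ≠ (canonicalGraph S).dist y w := by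
  have hne : x.1 ≠ y.1 := fun h => hxy (Subtype.ext h)
  obtain ⟨i, hi⟩ := Function.ne_iff.mp hne
  obtain ⟨z, ⟨hzS, hzi⟩, -⟩ := hS.2.1 i
  refine ⟨⟨z, hzS⟩, ⟨i, hzi⟩, fun h => ?_⟩
  have hx := dist_eq_coord hS x ⟨z, hzS⟩ i hzi
  have hy := dist_eq_coord hS y ⟨z, hzS⟩ i hzi
  rw [h] at hx
  exact hi (by omega)
end

section
/- Let S ⊂ ℤ^n be realizable. All realizations of S are equivalent (i.e., S is uniquely realizable) if and only if for every x, y ∈ S with max_{i∈[n]} |x_i − y_i| = 1 there exists i ∈ [n] such that either (x_i < y_i and {z ∈ D_S(y) : z_i = y_i − 1} = {x}) or (y_i < x_i and {z ∈ D_S(x) : z_i = x_i − 1} = {y}), where D_S(w) = {z ∈ S : max_{i∈[n]} |w_i − z_i| = 1}. -/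
private lemma walk_abs_le {n : ℕ} {S : Finset (Fin n → ℤ)} {H : SimpleGraph {x // x ∈ S}}
    (hsub : ∀ u v, H.Adj u v → maxDiffOne u.1 v.1) {u w : {x // x ∈ S}}
    (p : H.Walk u w) (i : Fin n) : |u.1 i - w.1 i| ≤ (p.length : ℤ) := by
  induction p with
  | nil => simp
  | @cons a b c h q ih =>
    have h1 := (hsub a b h).1 i
    have := abs_sub_le (a.1 i) (b.1 i) (c.1 i)
    simp only [SimpleGraph.Walk.length_cons]
    push_cast
    linarith

private lemma exists_adj_dist {V : Type*} {G : SimpleGraph V} (hc : G.Connected) {u w : V}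
    {k : ℕ} (h : G.dist u w = k + 1) : ∃ z, G.Adj u z ∧ G.dist z w = k := by
  obtain ⟨p, hp⟩ := hc.exists_walk_length_eq_dist u w
  cases p with
  | nil => rw [h] at hp; simp at hp
  | @cons _ b _ hadj q =>
    refine ⟨b, hadj, le_antisymm ?_ ?_⟩
    · have := SimpleGraph.dist_le q
      rw [h] at hp
      simp only [SimpleGraph.Walk.length_cons] at hp
      omega
    · have h1 : G.dist u b ≤ 1 := by
        simpa using SimpleGraph.dist_le (SimpleGraph.Walk.cons hadj SimpleGraph.Walk.nil)
      have h2 := hc.dist_triangle (u := u) (v := b) (w := w)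
      omega

private lemma exists_walk_down {n : ℕ} {S : Finset (Fin n → ℤ)} (hS : Realizable S)
    {H : SimpleGraph {x // x ∈ S}}
    (hdown : ∀ w : {x // x ∈ S}, ∀ i : Fin n, 0 < w.1 i →
      ∃ z, H.Adj w z ∧ z.1 i = w.1 i - 1) (k : ℕ) :
    ∀ (u ω : {x // x ∈ S}) (i : Fin n), ω.1 i = 0 → u.1 i = k →
      ∃ p : H.Walk u ω, p.length = k := by
  induction k with
  | zero =>
    intro u ω i hω hu
    have huω : u = ω := by
      obtain ⟨x, -, hx'⟩ := hS.2.1 i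
      exact Subtype.ext ((hx' u.1 ⟨u.2, by exact_mod_cast hu⟩).trans
        (hx' ω.1 ⟨ω.2, hω⟩).symm)
    subst huω
    exact ⟨.nil, rfl⟩
  | succ k ih =>
    intro u ω i hω hu
    obtain ⟨z, hadj, hz⟩ := hdown u i (by rw [hu]; positivity)
    obtain ⟨p, hp⟩ := ih z ω i hω (by rw [hz, hu]; push_cast; ring)
    exact ⟨.cons hadj p, by simp [hp]⟩

private lemma isRealization_of_down {n : ℕ} (hn : 0 < n) {S : Finset (Fin n → ℤ)}
    (hS : Realizable S) (H : SimpleGraph {x // x ∈ S})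
    (hsub : ∀ u v, H.Adj u v → maxDiffOne u.1 v.1)
    (hdown : ∀ w : {x // x ∈ S}, ∀ i : Fin n, 0 < w.1 i →
      ∃ z, H.Adj w z ∧ z.1 i = w.1 i - 1) :
    IsRealization S H := by
  have key : ∀ (u ω : {x // x ∈ S}) (i : Fin n), ω.1 i = 0 →
      ∃ p : H.Walk u ω, p.length = (u.1 i).toNat := by
    intro u ω i hω
    exact exists_walk_down hS hdown (u.1 i).toNat u ω i hω
      (Int.toNat_of_nonneg ((hS.1 u.1 u.2).1 i)).symm
  obtain ⟨w0, ⟨hw0S, hw00⟩, -⟩ := hS.2.1 ⟨0, hn⟩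
  have hreach : ∀ u : {x // x ∈ S}, H.Reachable u ⟨w0, hw0S⟩ := fun u =>
    ⟨(key u ⟨w0, hw0S⟩ ⟨0, hn⟩ hw00).choose⟩
  have hconn : H.Connected := by
    have : Nonempty {x // x ∈ S} := ⟨⟨w0, hw0S⟩⟩
    exact ⟨fun u v => (hreach u).trans (hreach v).symm⟩
  refine ⟨hconn, fun u w i hw => ?_⟩
  obtain ⟨p, hp⟩ := key u w i hw
  have hle : H.dist u w ≤ (u.1 i).toNat := hp ▸ SimpleGraph.dist_le p
  obtain ⟨q, hq⟩ := hconn.exists_walk_length_eq_dist u w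
  have hge := walk_abs_le hsub q i
  rw [hq, hw, sub_zero] at hge
  have hpos := (hS.1 u.1 u.2).1 i
  rw [abs_of_nonneg hpos] at hge
  omega

/-- a realizable set `S` is uniquely realizable (every realization
equals the canonical one) iff for all `x, y ∈ S` with `max_i |x i - y i| = 1`
there is a coordinate `i` such that either `x i < y i` and
`{z ∈ D_S(y) : z i = y i - 1} = {x}`, or `y i < x i` and
`{z ∈ D_S(x) : z i = x i - 1} = {y}`, where `D_S(w) = {z ∈ S : maxDiffOne w z}`. -/
theorem uniquely_realizable_iff {n : ℕ} (hn : 0 < n) (S : Finset (Fin n → ℤ))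
    (hS : Realizable S) :
    (∀ G : SimpleGraph {v // v ∈ S}, IsRealization S G → G = canonicalGraph S) ↔
      ∀ x ∈ S, ∀ y ∈ S, maxDiffOne x y →
        ∃ i : Fin n,
          (x i < y i ∧ {z : Fin n → ℤ | z ∈ S ∧ maxDiffOne y z ∧ z i = y i - 1} = {x}) ∨
          (y i < x i ∧ {z : Fin n → ℤ | z ∈ S ∧ maxDiffOne x z ∧ z i = x i - 1} = {y}) := by
  constructor
  · -- uniqueness → condition
    intro hUniq x hx y hy hxy
    by_contra hcon
    push_neg at hcon
    have hxyne : x ≠ y := by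
      obtain ⟨i0, hi0⟩ := hxy.2
      intro h
      rw [h] at hi0
      simp at hi0
    set X : {v // v ∈ S} := ⟨x, hx⟩ with hXdef
    set Y : {v // v ∈ S} := ⟨y, hy⟩ with hYdef
    have hXY : X ≠ Y := fun h => hxyne (congrArg Subtype.val h)
    set H : SimpleGraph {v // v ∈ S} :=
      { Adj := fun u v => maxDiffOne u.1 v.1 ∧ ¬((u = X ∧ v = Y) ∨ (u = Y ∧ v = X))
        symm := by
          constructor
          rintro u v ⟨⟨h1, i, hi⟩, h2⟩
          exact ⟨⟨fun j => by rw [abs_sub_comm]; exact h1 j, i, by rwa [abs_sub_comm]⟩,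
            fun h => h2 (h.elim (fun ⟨a, b⟩ => Or.inr ⟨b, a⟩) (fun ⟨a, b⟩ => Or.inl ⟨b, a⟩))⟩
        loopless := by
          constructor
          rintro u ⟨⟨-, i, hi⟩, -⟩
          simp at hi } with hHdef
    have hsub : ∀ u v, H.Adj u v → maxDiffOne u.1 v.1 := fun u v h => h.1
    have hdown : ∀ w : {v // v ∈ S}, ∀ i : Fin n, 0 < w.1 i →
        ∃ z, H.Adj w z ∧ z.1 i = w.1 i - 1 := by
      intro w i hwi
      obtain ⟨z, hzS, hzi, hzd⟩ := hS.2.2 w.1 w.2 i hwi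
      have hmd : maxDiffOne w.1 z :=
        ⟨fun j => by rw [abs_sub_comm]; exact hzd j, i, by rw [hzi]; simp⟩
      by_cases hbad : (w = X ∧ (⟨z, hzS⟩ : {v // v ∈ S}) = Y) ∨
          (w = Y ∧ (⟨z, hzS⟩ : {v // v ∈ S}) = X)
      · rcases hbad with ⟨hwX, hzY⟩ | ⟨hwY, hzX⟩
        · -- w = x, z = y; so y i = x i - 1
          have hw1 : w.1 = x := congrArg Subtype.val hwX
          have hz1 : z = y := congrArg Subtype.val hzY
          have hlt : y i < x i := by rw [← hz1, ← hw1, hzi]; omega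
          have hne := (hcon i).2 hlt
          have hymem : y ∈ {z : Fin n → ℤ | z ∈ S ∧ maxDiffOne x z ∧ z i = x i - 1} :=
            ⟨hy, by rw [← hw1, ← hz1]; exact hmd, by rw [← hz1, ← hw1]; exact hzi⟩
          have : ∃ z' ∈ {z : Fin n → ℤ | z ∈ S ∧ maxDiffOne x z ∧ z i = x i - 1},
              z' ≠ y := by
            by_contra hc
            push_neg at hc
            exact hne (Set.eq_singleton_iff_unique_mem.mpr ⟨hymem, hc⟩)
          obtain ⟨z', ⟨hz'S, hz'md, hz'i⟩, hz'ne⟩ := this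
          refine ⟨⟨z', hz'S⟩, ⟨?_, ?_⟩, ?_⟩
          · rw [hw1]; exact hz'md
          · rintro (⟨-, hz'Y⟩ | ⟨hwY, -⟩)
            · exact hz'ne (congrArg Subtype.val hz'Y)
            · exact hXY (hwX.symm.trans hwY)
          · rw [hw1]; exact hz'i
        · -- w = y, z = x; so x i = y i - 1
          have hw1 : w.1 = y := congrArg Subtype.val hwY
          have hz1 : z = x := congrArg Subtype.val hzX
          have hlt : x i < y i := by rw [← hz1, ← hw1, hzi]; omega
          have hne := (hcon i).1 hlt
          have hxmem : x ∈ {z : Fin n → ℤ | z ∈ S ∧ maxDiffOne y z ∧ z i = y i - 1} :=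
            ⟨hx, by rw [← hw1, ← hz1]; exact hmd, by rw [← hz1, ← hw1]; exact hzi⟩
          have : ∃ z' ∈ {z : Fin n → ℤ | z ∈ S ∧ maxDiffOne y z ∧ z i = y i - 1},
              z' ≠ x := by
            by_contra hc
            push_neg at hc
            exact hne (Set.eq_singleton_iff_unique_mem.mpr ⟨hxmem, hc⟩)
          obtain ⟨z', ⟨hz'S, hz'md, hz'i⟩, hz'ne⟩ := this
          refine ⟨⟨z', hz'S⟩, ⟨?_, ?_⟩, ?_⟩
          · rw [hw1]; exact hz'md
          · rintro (⟨hwX, -⟩ | ⟨-, hz'X⟩)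
            · exact hXY (hwX.symm.trans hwY)
            · exact hz'ne (congrArg Subtype.val hz'X)
          · rw [hw1]; exact hz'i
      · exact ⟨⟨z, hzS⟩, ⟨hmd, hbad⟩, hzi⟩
    have hreal := isRealization_of_down hn hS H hsub hdown
    have hH := hUniq H hreal
    have hadj : H.Adj X Y := by rw [hH]; exact hxy
    exact hadj.2 (Or.inl ⟨rfl, rfl⟩)
  · -- condition → uniqueness
    intro hCond G hG
    obtain ⟨hconn, hdist⟩ := hG
    have hsub : ∀ u v : {v // v ∈ S}, G.Adj u v → maxDiffOne u.1 v.1 := by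
      intro u v huv
      have hd1 : G.dist u v ≤ 1 := by
        simpa using SimpleGraph.dist_le (SimpleGraph.Walk.cons huv SimpleGraph.Walk.nil)
      have hd2 : G.dist v u ≤ 1 := SimpleGraph.dist_comm ▸ hd1
      have hbd : ∀ i, |u.1 i - v.1 i| ≤ 1 := by
        intro i
        obtain ⟨w, ⟨hwS, hw0⟩, -⟩ := hS.2.1 i
        have h1 := hdist u ⟨w, hwS⟩ i hw0
        have h2 := hdist v ⟨w, hwS⟩ i hw0
        have t1 := hconn.dist_triangle (u := u) (v := v) (w := ⟨w, hwS⟩)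
        have t2 := hconn.dist_triangle (u := v) (v := u) (w := ⟨w, hwS⟩)
        rw [abs_le, ← h1, ← h2]
        omega
      refine ⟨hbd, ?_⟩
      have hne : u.1 ≠ v.1 := fun h => huv.ne (Subtype.ext h)
      obtain ⟨i, hi⟩ := Function.ne_iff.mp hne
      exact ⟨i, le_antisymm (hbd i) (Int.one_le_abs (sub_ne_zero.mpr hi))⟩
    ext u v
    constructor
    · exact fun h => hsub u v h
    · intro hxy
      have hxy' : maxDiffOne u.1 v.1 := hxy
      obtain ⟨i, hcase⟩ := hCond u.1 u.2 v.1 v.2 hxy'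
      obtain ⟨w, ⟨hwS, hw0⟩, -⟩ := hS.2.1 i
      rcases hcase with ⟨hlt, hset⟩ | ⟨hlt, hset⟩
      · -- u i < v i : v has a unique down-neighbor u
        have hdv := hdist v ⟨w, hwS⟩ i hw0
        have hu0 := (hS.1 u.1 u.2).1 i
        have hdveq : G.dist v ⟨w, hwS⟩ = (G.dist v ⟨w, hwS⟩ - 1) + 1 := by omega
        obtain ⟨z, hadj, hz⟩ := exists_adj_dist hconn hdveq
        have hdz := hdist z ⟨w, hwS⟩ i hw0
        have hzi : z.1 i = v.1 i - 1 := by rw [← hdz, hz]; omega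
        have hzmem : z.1 ∈ {z : Fin n → ℤ | z ∈ S ∧ maxDiffOne v.1 z ∧ z i = v.1 i - 1} :=
          ⟨z.2, hsub v z hadj, hzi⟩
        rw [hset, Set.mem_singleton_iff] at hzmem
        have : z = u := Subtype.ext hzmem
        exact (this ▸ hadj).symm
      · -- v i < u i
        have hdu := hdist u ⟨w, hwS⟩ i hw0
        have hv0 := (hS.1 v.1 v.2).1 i
        have hdueq : G.dist u ⟨w, hwS⟩ = (G.dist u ⟨w, hwS⟩ - 1) + 1 := by omega
        obtain ⟨z, hadj, hz⟩ := exists_adj_dist hconn hdueq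
        have hdz := hdist z ⟨w, hwS⟩ i hw0
        have hzi : z.1 i = u.1 i - 1 := by rw [← hdz, hz]; omega
        have hzmem : z.1 ∈ {z : Fin n → ℤ | z ∈ S ∧ maxDiffOne u.1 z ∧ z i = u.1 i - 1} :=
          ⟨z.2, hsub u z hadj, hzi⟩
        rw [hset, Set.mem_singleton_iff] at hzmem
        have : z = v := Subtype.ext hzmem
        exact this ▸ hadj
end

section
/- Let S ⊂ ℤ^n be a realizable set. There exists a realization (T, W) of S with T a tree if and only if: (i) for every x, y ∈ S with max_{i∈[n]} |x_i − y_i| = 1, we have x_j ≠ y_j for every j ∈ [n]; and (ii) for every x ∈ S₀ and every j ∈ [n] with x_j > 0, there exists exactly one y ∈ S₀ with max_{i∈[n]} |x_i − y_i| = 1 and y_j = x_j − 1. Here S₀ = {x ∈ S : x − (1,…,1) ∉ S}. -/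
section Helpers

open SimpleGraph Walk


variable {V : Type*} [DecidableEq V] {G : SimpleGraph V}

lemma path_length_eq_dist (hT : G.IsTree) {u v : V} (p : G.Walk u v) (hp : p.IsPath) :
    p.length = G.dist u v := by
  obtain ⟨q, hq, hlen⟩ := hT.isConnected.exists_path_of_dist u v
  have := hT.IsAcyclic.path_unique ⟨p, hp⟩ ⟨q, hq⟩
  rw [← hlen]
  exact congrArg (fun r : G.Path u v => r.1.length) this

lemma dist_add_dist_of_mem_support (hT : G.IsTree) {u v c : V} (p : G.Walk u v)
    (hp : p.IsPath) (hc : c ∈ p.support) :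
    G.dist u c + G.dist c v = G.dist u v := by
  have h1 := path_length_eq_dist hT _ (hp.takeUntil hc)
  have h2 := path_length_eq_dist hT _ (hp.dropUntil hc)
  have h3 := path_length_eq_dist hT p hp
  have h4 : (p.takeUntil c hc).length + (p.dropUntil c hc).length = p.length := by
    rw [← Walk.length_append, Walk.take_spec]
  omega

lemma adj_dist_step (hT : G.IsTree) {u v : V} (h : G.Adj u v) (w : V) :
    G.dist u w = G.dist v w + 1 ∨ G.dist v w = G.dist u w + 1 := by
  obtain ⟨p, hp, hlen⟩ := hT.isConnected.exists_path_of_dist v w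
  by_cases hu : u ∈ p.support
  · right
    have := dist_add_dist_of_mem_support hT p hp hu
    have h1 : G.dist v u = 1 := by rw [SimpleGraph.dist_eq_one_iff_adj]; exact h.symm
    omega
  · left
    have hcons : (Walk.cons h p).IsPath := hp.cons hu
    have := path_length_eq_dist hT _ hcons
    rw [Walk.length_cons, hlen] at this
    omega

set_option linter.unusedSectionVars false

lemma down_unique (hT : G.IsTree) {u v v' w : V} (h : G.Adj u v) (h' : G.Adj u v')
    (hd : G.dist v w + 1 = G.dist u w) (hd' : G.dist v' w + 1 = G.dist u w) : v = v' := by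
  -- build the unique path from u to w via v and via v'
  have key : ∀ {x : V} (hx : G.Adj u x), G.dist x w + 1 = G.dist u w →
      ∃ (p : G.Walk u w), p.IsPath ∧ ∃ (q : G.Walk x w) (hq : q.IsPath), p = Walk.cons hx q := by
    intro x hx hdx
    obtain ⟨q, hq, hlen⟩ := hT.isConnected.exists_path_of_dist x w
    have hu : u ∉ q.support := by
      intro hu
      have := dist_add_dist_of_mem_support hT q hq hu
      have h1 : G.dist x u = 1 := by rw [SimpleGraph.dist_eq_one_iff_adj]; exact hx.symm
      omega
    exact ⟨Walk.cons hx q, hq.cons hu, q, hq, rfl⟩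
  obtain ⟨p, hp, q, hq, rfl⟩ := key h hd
  obtain ⟨p', hp', q', hq', hpq'⟩ := key h' hd'
  have := hT.IsAcyclic.path_unique ⟨Walk.cons h q, hp⟩ ⟨p', hp'⟩
  have hwalks : Walk.cons h q = Walk.cons h' q' := by
    have h2 := congrArg (fun r : G.Path u w => r.1) this
    simpa [hpq'] using h2
  have := congrArg (fun r : G.Walk u w => r.getVert 1) hwalks
  simpa [Walk.getVert_cons _ _ one_ne_zero] using this

lemma down_exists (hT : G.IsTree) {u w : V} (hd : 0 < G.dist u w) :
    ∃ v : V, G.Adj u v ∧ G.dist v w + 1 = G.dist u w := by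
  obtain ⟨p, hp, hlen⟩ := hT.isConnected.exists_path_of_dist u w
  cases p with
  | nil => rw [SimpleGraph.dist_self] at hd; omega
  | @cons _ x _ hadj q =>
    refine ⟨x, hadj, ?_⟩
    have := path_length_eq_dist hT q hp.of_cons
    rw [Walk.length_cons] at hlen
    omega

lemma acyclic_aux (G : SimpleGraph V) (f : V → ℤ)
    (hne : ∀ a b, G.Adj a b → f a ≠ f b)
    (huniq : ∀ a b b', G.Adj a b → G.Adj a b' → f b < f a → f b' < f a → b = b') :
    G.IsAcyclic := by
  intro v c hc
  have hsne : v ∈ c.support := c.start_mem_support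
  obtain ⟨u, hu, hmax⟩ := c.support.toFinset.exists_max_image f ⟨v, List.mem_toFinset.mpr hsne⟩
  have hu' : u ∈ c.support := List.mem_toFinset.mp hu
  have hmax' : ∀ b ∈ c.support, f b ≤ f u := fun b hb => hmax b (List.mem_toFinset.mpr hb)
  set c' := c.rotate u hu' with hc'def
  have hcyc : c'.IsCycle := hc.rotate hu'
  have hmem : ∀ b ∈ c'.support, f b ≤ f u := by
    intro b hb
    rcases List.mem_cons.mp (c'.support_eq_cons ▸ hb) with h | h
    · exact h ▸ le_refl _
    · exact hmax' b (List.mem_of_mem_tail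
        (((Walk.support_rotate c u hu').mem_iff).mp h))
  have h3 := hcyc.three_le_length
  cases hc2 : c' with
  | nil => rw [hc2] at hcyc; exact hcyc.ne_nil rfl
  | @cons _ w _ h p =>
    rw [hc2] at hcyc hmem h3
    have hp : p.IsPath := ((Walk.cons_isCycle_iff p h).mp hcyc).1
    have hplen : 2 ≤ p.length := by simp [Walk.length_cons] at h3; omega
    have hrev : p.reverse.IsPath := (Walk.isPath_reverse_iff p).mpr hp
    have hrnil : ¬ p.reverse.Nil := by
      rw [Walk.not_nil_iff_lt_length, Walk.length_reverse]; omega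
    obtain ⟨b, h2, r, hr⟩ := Walk.not_nil_iff.mp hrnil
    have hrpath : (Walk.cons h2 r).IsPath := hr ▸ hrev
    have hfw : f w < f u := by
      refine lt_of_le_of_ne (hmem w ?_) (hne u w h).symm
      rw [Walk.support_cons]
      exact List.mem_cons_of_mem _ p.start_mem_support
    have hfb : f b < f u := by
      have hbmem : b ∈ p.support := by
        have : b ∈ p.reverse.support := by
          rw [hr, Walk.support_cons]
          exact List.mem_cons_of_mem _ r.start_mem_support
        rwa [Walk.support_reverse, List.mem_reverse] at this
      refine lt_of_le_of_ne ?_ (hne u b h2).symm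
      apply hmem
      rw [Walk.support_cons]
      exact List.mem_cons_of_mem _ hbmem
    have hwb : w = b := huniq u w b h h2 hfw hfb
    subst hwb
    have : r.IsPath := hrpath.of_cons
    have hrnil2 : r = Walk.nil := (Walk.isPath_iff_eq_nil (p := r)).mp hrpath.of_cons
    have : p.length = 1 := by
      have := congrArg Walk.length hr
      rw [Walk.length_reverse, hrnil2] at this
      simpa using this
    omega


section Forward

variable {n : ℕ} {S : Finset (Fin n → ℤ)} {T : SimpleGraph {x // x ∈ S}}

/-- coordinates of adjacent vertices in a tree realization differ by exactly 1 -/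
lemma adj_coord (hS : Realizable S) (hT : T.IsTree) (hreal : IsRealization S T)
    {u v : {x // x ∈ S}} (h : T.Adj u v) (i : Fin n) : |u.1 i - v.1 i| = 1 := by
  obtain ⟨x, ⟨hxS, hx0⟩, -⟩ := hS.2.1 i
  set w : {x // x ∈ S} := ⟨x, hxS⟩ with hw
  have hu := hreal.2 u w i hx0
  have hv := hreal.2 v w i hx0
  rcases adj_dist_step hT h w with hd | hd <;>
  · rw [abs_eq (by norm_num : (0:ℤ) ≤ 1)]
    omega
lemma walk_parity (hS : Realizable S) (hT : T.IsTree) (hreal : IsRealization S T)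
    {u v : {x // x ∈ S}} (p : T.Walk u v) (i : Fin n) :
    (u.1 i - v.1 i) % 2 = (p.length : ℤ) % 2 := by
  induction p with
  | nil => simp
  | @cons a b c hab q ih =>
    have h1 := adj_coord hS hT hreal hab i
    rw [abs_eq (by norm_num : (0:ℤ) ≤ 1)] at h1
    rw [Walk.length_cons]
    push_cast
    omega

/-- statement (i), forward direction -/
lemma forward_i (hS : Realizable S) (hT : T.IsTree) (hreal : IsRealization S T) :
    ∀ x ∈ S, ∀ y ∈ S, maxDiffOne x y → ∀ j, x j ≠ y j := by
  intro x hx y hy hmd j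
  obtain ⟨i, hi⟩ := hmd.2
  obtain ⟨p⟩ := hT.isConnected ⟨x, hx⟩ ⟨y, hy⟩
  have hpar := walk_parity hS hT hreal p
  have h1 := hpar i
  have h2 := hpar j
  simp only at h1 h2
  rw [abs_eq (by norm_num : (0:ℤ) ≤ 1)] at hi
  intro hxy
  rw [hxy] at h2
  omega

/-- all coordinates differ by exactly one for maxDiffOne pairs (forward) -/
lemma forward_alldiff (hS : Realizable S) (hT : T.IsTree) (hreal : IsRealization S T)
    {x y : Fin n → ℤ} (hx : x ∈ S) (hy : y ∈ S) (hmd : maxDiffOne x y) (i : Fin n) :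
    |x i - y i| = 1 := by
  have h1 := hmd.1 i
  have h2 := forward_i hS hT hreal x hx y hy hmd i
  rw [abs_le] at h1
  rw [abs_eq (by norm_num : (0:ℤ) ≤ 1)]
  rcases lt_or_gt_of_ne (sub_ne_zero_of_ne h2) with h | h <;> omega

end Forward

section Key

variable {n : ℕ} {S : Finset (Fin n → ℤ)} {T : SimpleGraph {x // x ∈ S}}

lemma adj_or_second (hS : Realizable S) (hT : T.IsTree) (hreal : IsRealization S T)
    {u v : {x // x ∈ S}} (hne : u ≠ v) (hd : ∀ i, |u.1 i - v.1 i| = 1) :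
    T.Adj u v ∨ ∃ z : {x // x ∈ S}, T.Adj u z ∧ z.1 = u.1 - 1 ∧
      T.dist z v + 1 = T.dist u v := by
  have hconn := hT.isConnected
  have hDpos : 0 < T.dist u v := hconn.pos_dist_of_ne hne
  by_cases hD1 : T.dist u v = 1
  · exact Or.inl ((SimpleGraph.dist_eq_one_iff_adj).mp hD1)
  have hD2 : 2 ≤ T.dist u v := by omega
  obtain ⟨p, hp, hlen⟩ := hconn.exists_path_of_dist u v
  cases p with
  | nil => rw [SimpleGraph.dist_self] at hD2; omega
  | @cons _ z _ h q =>
    have hq : q.IsPath := hp.of_cons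
    have hqlen : q.length = T.dist z v := path_length_eq_dist hT q hq
    rw [Walk.length_cons] at hlen
    by_cases hall : ∀ i, z.1 i = u.1 i - 1
    · refine Or.inr ⟨z, h, funext fun i => by simp [hall i], by omega⟩
    · exfalso
      push_neg at hall
      obtain ⟨i, hi⟩ := hall
      have hzi : z.1 i = u.1 i + 1 := by
        have := adj_coord hS hT hreal h i
        rw [abs_eq (by norm_num : (0:ℤ) ≤ 1)] at this
        omega
      -- the vertex ω^i
      obtain ⟨x, ⟨hxS, hx0⟩, -⟩ := hS.2.1 i
      set w : {x // x ∈ S} := ⟨x, hxS⟩ with hwdef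
      have hdu : (T.dist u w : ℤ) = u.1 i := hreal.2 u w i hx0
      have hdz : (T.dist z w : ℤ) = u.1 i + 1 := by rw [hreal.2 z w i hx0]; exact_mod_cast hzi
      have hdv : (T.dist v w : ℤ) = v.1 i := hreal.2 v w i hx0
      obtain ⟨r, hr, hrlen⟩ := hconn.exists_path_of_dist u w
      have hzr : z ∉ r.support := by
        intro hzr
        have hsum := dist_add_dist_of_mem_support hT r hr hzr
        have h1 : T.dist u z = 1 := (SimpleGraph.dist_eq_one_iff_adj).mpr h
        omega
      have hR : (Walk.cons h.symm r).IsPath := hr.cons hzr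
      -- W = q.reverse ++ cons h.symm r  is a path from v to w
      have hW : (q.reverse.append (Walk.cons h.symm r)).IsPath := by
        rw [Walk.isPath_def, Walk.support_append]
        apply List.Nodup.append
        · exact ((Walk.isPath_reverse_iff q).mpr hq).support_nodup
        · rw [Walk.support_cons, List.tail_cons]
          exact hr.support_nodup
        · intro c hc1 hc2
          rw [Walk.support_cons, List.tail_cons] at hc2
          rw [Walk.support_reverse, List.mem_reverse] at hc1
          have hA := dist_add_dist_of_mem_support hT q hq hc1
          have hB := dist_add_dist_of_mem_support hT r hr hc2
          have tri1 := hconn.dist_triangle (u := z) (v := c) (w := w)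
          have tri2 := hconn.dist_triangle (u := z) (v := u) (w := c)
          have tri3 := hconn.dist_triangle (u := u) (v := c) (w := v)
          have h1 : T.dist u z = 1 := (SimpleGraph.dist_eq_one_iff_adj).mpr h
          have h2 : T.dist z u = 1 := by rwa [SimpleGraph.dist_comm] at h1
          omega
      have hWlen := path_length_eq_dist hT _ hW
      rw [Walk.length_append, Walk.length_reverse, Walk.length_cons] at hWlen
      have hdvw : T.dist v w = q.length + (r.length + 1) := hWlen.symm
      have hvi := hd i
      rw [abs_eq (by norm_num : (0:ℤ) ≤ 1)] at hvi
      omega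

end Key

section Forward2

variable {n : ℕ} {S : Finset (Fin n → ℤ)} {T : SimpleGraph {x // x ∈ S}}

lemma coord_down_unique (hS : Realizable S) (hT : T.IsTree) (hreal : IsRealization S T)
    {u v v' : {x // x ∈ S}} (i : Fin n) (h : T.Adj u v) (h' : T.Adj u v')
    (hv : v.1 i = u.1 i - 1) (hv' : v'.1 i = u.1 i - 1) : v = v' := by
  obtain ⟨x, ⟨hxS, hx0⟩, -⟩ := hS.2.1 i
  set w : {x // x ∈ S} := ⟨x, hxS⟩ with hwdef
  have hdu : (T.dist u w : ℤ) = u.1 i := hreal.2 u w i hx0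
  have hdv : (T.dist v w : ℤ) = v.1 i := hreal.2 v w i hx0
  have hdv' : (T.dist v' w : ℤ) = v'.1 i := hreal.2 v' w i hx0
  exact down_unique hT (w := w) h h' (by omega) (by omega)

lemma adj_of_S0 (hS : Realizable S) (hT : T.IsTree) (hreal : IsRealization S T)
    {u v : {x // x ∈ S}} (hu1 : u.1 - 1 ∉ S) (hne : u ≠ v)
    (hd : ∀ i, |u.1 i - v.1 i| = 1) : T.Adj u v := by
  rcases adj_or_second hS hT hreal hne hd with h | ⟨z, -, hz1, -⟩
  · exact h
  · exact absurd (hz1 ▸ z.2) hu1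

lemma forward_ii (hS : Realizable S) (hT : T.IsTree) (hreal : IsRealization S T) :
    ∀ x ∈ S, (x - 1) ∉ S → ∀ j : Fin n, 0 < x j →
      ∃! y : Fin n → ℤ, (y ∈ S ∧ (y - 1) ∉ S) ∧ maxDiffOne x y ∧ y j = x j - 1 := by
  intro x hx hx1 j hj
  set u : {x // x ∈ S} := ⟨x, hx⟩ with hudef
  obtain ⟨xj, ⟨hxjS, hxj0⟩, -⟩ := hS.2.1 j
  set w : {x // x ∈ S} := ⟨xj, hxjS⟩ with hwdef
  have hdu : (T.dist u w : ℤ) = x j := hreal.2 u w j hxj0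
  have hdupos : 0 < T.dist u w := by omega
  obtain ⟨v, hadj, hvd⟩ := down_exists hT hdupos
  have hdv : (T.dist v w : ℤ) = v.1 j := hreal.2 v w j hxj0
  have hvj : v.1 j = x j - 1 := by omega
  have hvx : ∀ i, |x i - v.1 i| = 1 := fun i => adj_coord hS hT hreal hadj i
  -- v is in S₀
  have hvS0 : v.1 - 1 ∉ S := by
    intro hv1
    set u' : {x // x ∈ S} := ⟨v.1 - 1, hv1⟩ with hu'def
    have hne' : v ≠ u' := by
      intro hvu
      have := congrArg (fun t => t.1 j) hvu
      simp only [hu'def, Pi.sub_apply, Pi.one_apply] at this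
      omega
    have hd' : ∀ i, |v.1 i - u'.1 i| = 1 := by
      intro i; simp [hu'def]
    have hA : T.Adj v u' := by
      rcases adj_or_second hS hT hreal hne' hd' with h | ⟨z, hzadj, hz1, hzd⟩
      · exact h
      · have hz : z = u' := Subtype.ext (by rw [hz1])
        rw [hz, SimpleGraph.dist_self] at hzd
        exact (SimpleGraph.dist_eq_one_iff_adj).mp (by omega)
    have hvi : ∃ i, v.1 i = x i + 1 := by
      by_contra hno
      push_neg at hno
      have : v.1 = x - 1 := by
        funext i
        have h1 := hvx i
        rw [abs_eq (by norm_num : (0:ℤ) ≤ 1)] at h1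
        have := hno i
        simp only [Pi.sub_apply, Pi.one_apply]
        omega
      exact hx1 (this ▸ v.2)
    obtain ⟨i, hi⟩ := hvi
    have hui : u.1 i = v.1 i - 1 := by simp [hudef]; omega
    have hu'i : u'.1 i = v.1 i - 1 := by simp [hu'def]
    have : u = u' := coord_down_unique hS hT hreal i hadj.symm hA hui hu'i
    have := congrArg (fun t => t.1 j) this
    simp [hudef, hu'def, hvj] at this
    omega
  -- existence established; now uniqueness
  have hmdv : maxDiffOne x v.1 := by
    refine ⟨fun i => le_of_eq (hvx i), j, ?_⟩
    rw [hvj]; simp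
  refine ⟨v.1, ⟨⟨v.2, hvS0⟩, hmdv, hvj⟩, ?_⟩
  rintro y ⟨⟨hyS, -⟩, hmdy, hyj⟩
  set vy : {x // x ∈ S} := ⟨y, hyS⟩ with hvydef
  have hney : u ≠ vy := by
    intro h
    have := congrArg (fun t => t.1 j) h
    simp [hudef, hvydef, hyj] at this
    omega
  have hdy : ∀ i, |u.1 i - vy.1 i| = 1 :=
    fun i => forward_alldiff hS hT hreal hx hyS hmdy i
  have hadjy : T.Adj u vy := adj_of_S0 hS hT hreal hx1 hney hdy
  have : vy = v := coord_down_unique hS hT hreal j hadjy hadj (by simpa [hvydef] using hyj)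
    (by simpa using hvj)
  rw [← this]

end Forward2

section Backward

variable {n : ℕ} {S : Finset (Fin n → ℤ)}

lemma maxDiffOne_symm {x y : Fin n → ℤ} (h : maxDiffOne x y) : maxDiffOne y x :=
  ⟨fun i => by rw [abs_sub_comm]; exact h.1 i, h.2.imp fun i hi => by rwa [abs_sub_comm]⟩

/-- The tree realization: `x ~ x - 1`, plus `maxDiffOne`-edges inside `S₀`. -/
def treeGraph (S : Finset (Fin n → ℤ)) : SimpleGraph {x // x ∈ S} where
  Adj u v := u ≠ v ∧ ((u.1 = v.1 - 1 ∨ v.1 = u.1 - 1) ∨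
    (u.1 - 1 ∉ S ∧ v.1 - 1 ∉ S ∧ maxDiffOne u.1 v.1))
  symm := by
    constructor
    rintro u v ⟨hne, h⟩
    refine ⟨hne.symm, ?_⟩
    rcases h with h | ⟨h1, h2, h3⟩
    · exact Or.inl h.symm
    · exact Or.inr ⟨h2, h1, maxDiffOne_symm h3⟩
  loopless := ⟨fun u h => h.1 rfl⟩

lemma tg_adj_coord (hI : ∀ x ∈ S, ∀ y ∈ S, maxDiffOne x y → ∀ j, x j ≠ y j)
    {u v : {x // x ∈ S}} (h : (treeGraph S).Adj u v) (i : Fin n) :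
    |u.1 i - v.1 i| = 1 := by
  rcases h.2 with (h1 | h1) | ⟨-, -, hmd⟩
  · have := congrFun h1 i
    simp only [Pi.sub_apply, Pi.one_apply] at this
    rw [abs_eq (by norm_num : (0:ℤ) ≤ 1)]; omega
  · have := congrFun h1 i
    simp only [Pi.sub_apply, Pi.one_apply] at this
    rw [abs_eq (by norm_num : (0:ℤ) ≤ 1)]; omega
  · have h1 := hmd.1 i
    have h2 := hI u.1 u.2 v.1 v.2 hmd i
    rw [abs_le] at h1
    rw [abs_eq (by norm_num : (0:ℤ) ≤ 1)]
    rcases lt_or_gt_of_ne (sub_ne_zero_of_ne h2) with h | h <;> omega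

lemma tg_down (hS : Realizable S)
    (hII : ∀ x ∈ S, (x - 1) ∉ S → ∀ j : Fin n, 0 < x j →
      ∃! y : Fin n → ℤ, (y ∈ S ∧ (y - 1) ∉ S) ∧ maxDiffOne x y ∧ y j = x j - 1)
    (u : {x // x ∈ S}) (i : Fin n) (hpos : 0 < u.1 i) :
    ∃ v : {x // x ∈ S}, (treeGraph S).Adj u v ∧ v.1 i = u.1 i - 1 := by
  by_cases h1 : u.1 - 1 ∈ S
  · refine ⟨⟨u.1 - 1, h1⟩, ⟨?_, Or.inl (Or.inr rfl)⟩, by simp⟩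
    intro h
    have := congrArg (fun t => t.1 i) h
    simp only [Pi.sub_apply, Pi.one_apply] at this
    omega
  · obtain ⟨y, ⟨⟨hyS, hyS0⟩, hmd, hyi⟩, -⟩ := hII u.1 u.2 h1 i hpos
    refine ⟨⟨y, hyS⟩, ⟨?_, Or.inr ⟨h1, hyS0, hmd⟩⟩, hyi⟩
    intro h
    have := congrArg (fun t => t.1 i) h
    simp only at this
    omega

lemma tg_walk_down (hS : Realizable S)
    (hII : ∀ x ∈ S, (x - 1) ∉ S → ∀ j : Fin n, 0 < x j →
      ∃! y : Fin n → ℤ, (y ∈ S ∧ (y - 1) ∉ S) ∧ maxDiffOne x y ∧ y j = x j - 1)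
    {i : Fin n} {w : {x // x ∈ S}} (hw : w.1 i = 0) :
    ∀ (k : ℕ) (u : {x // x ∈ S}), u.1 i = (k : ℤ) →
      ∃ p : (treeGraph S).Walk u w, p.length = k := by
  intro k
  induction k with
  | zero =>
    intro u hu
    obtain ⟨x0, -, huni⟩ := hS.2.1 i
    have h1 : u.1 = x0 := huni u.1 ⟨u.2, by exact_mod_cast hu⟩
    have h2 : w.1 = x0 := huni w.1 ⟨w.2, hw⟩
    have : u = w := Subtype.ext (h1.trans h2.symm)
    subst this
    exact ⟨Walk.nil, rfl⟩
  | succ k ih =>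
    intro u hu
    have hpos : 0 < u.1 i := by rw [hu]; positivity
    obtain ⟨v, hadj, hvi⟩ := tg_down hS hII u i hpos
    obtain ⟨p, hp⟩ := ih v (by rw [hvi, hu]; push_cast; ring)
    exact ⟨Walk.cons hadj p, by simp [hp]⟩

lemma tg_lipschitz (hI : ∀ x ∈ S, ∀ y ∈ S, maxDiffOne x y → ∀ j, x j ≠ y j)
    {u v : {x // x ∈ S}} (p : (treeGraph S).Walk u v) (i : Fin n) :
    |u.1 i - v.1 i| ≤ (p.length : ℤ) := by
  induction p with
  | nil => simp
  | @cons a b c hab q ih =>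
    have h1 := tg_adj_coord hI hab i
    rw [Walk.length_cons]
    have h2 : a.1 i - c.1 i = (a.1 i - b.1 i) + (b.1 i - c.1 i) := by ring
    rw [abs_eq (by norm_num : (0:ℤ) ≤ 1)] at h1
    rw [abs_le] at ih ⊢
    push_cast
    omega

end Backward

section Backward2

variable {n : ℕ} {S : Finset (Fin n → ℤ)}

lemma tg_connected (hn : 0 < n) (hS : Realizable S)
    (hII : ∀ x ∈ S, (x - 1) ∉ S → ∀ j : Fin n, 0 < x j →
      ∃! y : Fin n → ℤ, (y ∈ S ∧ (y - 1) ∉ S) ∧ maxDiffOne x y ∧ y j = x j - 1) :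
    (treeGraph S).Connected := by
  set i0 : Fin n := ⟨0, hn⟩
  obtain ⟨x0, ⟨hx0S, hx00⟩, -⟩ := hS.2.1 i0
  set w : {x // x ∈ S} := ⟨x0, hx0S⟩ with hwdef
  have hreach : ∀ u : {x // x ∈ S}, (treeGraph S).Reachable u w := by
    intro u
    have hnn : 0 ≤ u.1 i0 := (hS.1 u.1 u.2).1 i0
    have hw0 : w.1 i0 = 0 := hx00
    obtain ⟨p, -⟩ := tg_walk_down hS hII hw0 (u.1 i0).toNat u (Int.toNat_of_nonneg hnn).symm
    exact ⟨p⟩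
  rw [SimpleGraph.connected_iff]
  exact ⟨fun u v => (hreach u).trans (hreach v).symm, ⟨w⟩⟩

lemma tg_dist (hn : 0 < n) (hS : Realizable S)
    (hI : ∀ x ∈ S, ∀ y ∈ S, maxDiffOne x y → ∀ j, x j ≠ y j)
    (hII : ∀ x ∈ S, (x - 1) ∉ S → ∀ j : Fin n, 0 < x j →
      ∃! y : Fin n → ℤ, (y ∈ S ∧ (y - 1) ∉ S) ∧ maxDiffOne x y ∧ y j = x j - 1)
    (u w : {x // x ∈ S}) (i : Fin n) (hw : w.1 i = 0) :
    ((treeGraph S).dist u w : ℤ) = u.1 i := by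
  have hnn : 0 ≤ u.1 i := (hS.1 u.1 u.2).1 i
  obtain ⟨p, hp⟩ := tg_walk_down hS hII hw (u.1 i).toNat u (by omega)
  have hle : (treeGraph S).dist u w ≤ (u.1 i).toNat := hp ▸ SimpleGraph.dist_le p
  obtain ⟨q, hq⟩ := SimpleGraph.Reachable.exists_walk_length_eq_dist ⟨p⟩
  have hlip := tg_lipschitz hI q i
  rw [hq, hw] at hlip
  rw [abs_le] at hlip
  omega

lemma tg_down_unique (hS : Realizable S)
    (hI : ∀ x ∈ S, ∀ y ∈ S, maxDiffOne x y → ∀ j, x j ≠ y j)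
    (hII : ∀ x ∈ S, (x - 1) ∉ S → ∀ j : Fin n, 0 < x j →
      ∃! y : Fin n → ℤ, (y ∈ S ∧ (y - 1) ∉ S) ∧ maxDiffOne x y ∧ y j = x j - 1)
    (i : Fin n) (a b b' : {x // x ∈ S})
    (hab : (treeGraph S).Adj a b) (hab' : (treeGraph S).Adj a b')
    (hb : b.1 i < a.1 i) (hb' : b'.1 i < a.1 i) : b = b' := by
  have hcb : b.1 i = a.1 i - 1 := by
    have := tg_adj_coord hI hab i
    rw [abs_eq (by norm_num : (0:ℤ) ≤ 1)] at this; omega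
  have hcb' : b'.1 i = a.1 i - 1 := by
    have := tg_adj_coord hI hab' i
    rw [abs_eq (by norm_num : (0:ℤ) ≤ 1)] at this; omega
  by_cases h1 : a.1 - 1 ∈ S
  · -- both must be a - 1
    have key : ∀ c : {x // x ∈ S}, (treeGraph S).Adj a c → c.1 i = a.1 i - 1 →
        c.1 = a.1 - 1 := by
      intro c hac hci
      rcases hac.2 with (h2 | h2) | ⟨h2, -, -⟩
      · have := congrFun h2 i
        simp only [Pi.sub_apply, Pi.one_apply] at this
        omega
      · exact h2
      · exact absurd h1 h2
    exact Subtype.ext ((key b hab hcb).trans (key b' hab' hcb').symm)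
  · have key : ∀ c : {x // x ∈ S}, (treeGraph S).Adj a c → c.1 i = a.1 i - 1 →
        (c.1 ∈ S ∧ c.1 - 1 ∉ S) ∧ maxDiffOne a.1 c.1 ∧ c.1 i = a.1 i - 1 := by
      intro c hac hci
      rcases hac.2 with (h2 | h2) | ⟨-, h2, h3⟩
      · have := congrFun h2 i
        simp only [Pi.sub_apply, Pi.one_apply] at this
        omega
      · exact absurd (h2 ▸ c.2) h1
      · exact ⟨⟨c.2, h2⟩, h3, hci⟩
    have hpos : 0 < a.1 i := by
      have := (hS.1 b.1 b.2).1 i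
      omega
    obtain ⟨y, -, huni⟩ := hII a.1 a.2 h1 i hpos
    have e1 := huni b.1 (key b hab hcb)
    have e2 := huni b'.1 (key b' hab' hcb')
    exact Subtype.ext (e1.trans e2.symm)

lemma tg_isTree (hn : 0 < n) (hS : Realizable S)
    (hI : ∀ x ∈ S, ∀ y ∈ S, maxDiffOne x y → ∀ j, x j ≠ y j)
    (hII : ∀ x ∈ S, (x - 1) ∉ S → ∀ j : Fin n, 0 < x j →
      ∃! y : Fin n → ℤ, (y ∈ S ∧ (y - 1) ∉ S) ∧ maxDiffOne x y ∧ y j = x j - 1) :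
    (treeGraph S).IsTree := by
  classical
  constructor
  · exact tg_connected hn hS hII
  · set i0 : Fin n := ⟨0, hn⟩
    apply acyclic_aux (treeGraph S) (fun u => u.1 i0)
    · intro a b hab
      have := tg_adj_coord hI hab i0
      rw [abs_eq (by norm_num : (0:ℤ) ≤ 1)] at this
      show a.1 i0 ≠ b.1 i0
      omega
    · intro a b b' hab hab' hb hb'
      exact tg_down_unique hS hI hII i0 a b b' hab hab' hb hb'

end Backward2

/-- a realizable set `S` admits a realization by a tree iff
(i) whenever `max_i |x i - y i| = 1` all coordinates of `x` and `y` differ, and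
(ii) for every `x ∈ S₀` and every `j` with `x j > 0` there is exactly one
`y ∈ S₀` with `max_i |x i - y i| = 1` and `y j = x j - 1`, where
`S₀ = {x ∈ S : x - (1,…,1) ∉ S}`. -/
theorem tree_realizable_iff {n : ℕ} (hn : 0 < n) (S : Finset (Fin n → ℤ))
    (hS : Realizable S) :
    (∃ T : SimpleGraph {v // v ∈ S}, T.IsTree ∧ IsRealization S T) ↔
      ((∀ x ∈ S, ∀ y ∈ S, maxDiffOne x y → ∀ j, x j ≠ y j) ∧
       (∀ x ∈ S, (x - 1) ∉ S → ∀ j : Fin n, 0 < x j →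
          ∃! y : Fin n → ℤ, (y ∈ S ∧ (y - 1) ∉ S) ∧ maxDiffOne x y ∧ y j = x j - 1)) := by
  constructor
  · rintro ⟨T, hT, hreal⟩
    exact ⟨forward_i hS hT hreal, forward_ii hS hT hreal⟩
  · rintro ⟨hI, hII⟩
    have ht := tg_isTree hn hS hI hII
    exact ⟨treeGraph S, ht, ht.isConnected, fun u w i hw => tg_dist hn hS hI hII u w i hw⟩
end Helpers
end

section
/- Let S ⊂ ℤ^n be realizable by a tree. Then S is uniquely realizable (every realization equals the canonical one) if and only if for every pair of distinct elements x, y ∈ S₀* we have max_{i∈[n]} |x_i − y_i| > 1, where S₀* = {x ∈ S : x − (1,…,1) ∉ S and x + (1,…,1) ∈ S}. -/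
namespace TUR

/-! ### Generic tree lemmas -/

section Tree

variable {V : Type*} {T : SimpleGraph V}

lemma exists_geodesic_path (hconn : T.Connected) (a b : V) :
    ∃ W : T.Walk a b, W.IsPath ∧ W.length = T.dist a b := by
  classical
  obtain ⟨W, hW⟩ := hconn.exists_walk_length_eq_dist a b
  refine ⟨W.bypass, W.bypass_isPath, le_antisymm ?_ ?_⟩
  · exact hW ▸ W.length_bypass_le
  · exact SimpleGraph.dist_le _

lemma path_length_eq_dist (hT : T.IsTree) {a b : V} (W : T.Walk a b) (hW : W.IsPath) :
    W.length = T.dist a b := by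
  obtain ⟨P, hP, hPl⟩ := exists_geodesic_path hT.isConnected a b
  rw [← hPl]
  obtain ⟨Q, -, hQ⟩ := hT.existsUnique_path a b
  rw [hQ W hW, hQ P hP]

lemma isPath_concat {a b c : V} (P : T.Walk a b) (h : T.Adj b c) (hP : P.IsPath)
    (hc : c ∉ P.support) : (P.concat h).IsPath := by
  rw [SimpleGraph.Walk.isPath_def, SimpleGraph.Walk.support_concat]
  simp only [List.concat_eq_append, List.nodup_append, List.nodup_cons, List.not_mem_nil,
    not_false_iff, List.nodup_nil, and_true, List.disjoint_singleton]
  refine ⟨(SimpleGraph.Walk.isPath_def _).mp hP, by simpa using fun (x : V) (hx : x ∈ P.support) (hxc : x = c) => hc (hxc ▸ hx)⟩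

lemma tree_dist_adj (hT : T.IsTree) (z : V) {a b : V} (hab : T.Adj a b) :
    T.dist z b = T.dist z a + 1 ∨ T.dist z b + 1 = T.dist z a := by
  classical
  obtain ⟨P, hP, hPl⟩ := exists_geodesic_path hT.isConnected z a
  by_cases hb : b ∈ P.support
  · right
    have ht : (P.takeUntil b hb).length = T.dist z b :=
      path_length_eq_dist hT _ (hP.takeUntil hb)
    have hsplit := P.take_spec hb
    have hlen : (P.takeUntil b hb).length + (P.dropUntil b hb).length = P.length := by
      conv_rhs => rw [← hsplit]
      rw [SimpleGraph.Walk.length_append]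
    have hba : 0 < (P.dropUntil b hb).length := by
      rcases Nat.eq_zero_or_pos (P.dropUntil b hb).length with h0 | h0
      · exfalso
        have := (P.dropUntil b hb).eq_of_length_eq_zero h0
        exact hab.ne' this
      · exact h0
    have htri : T.dist z a ≤ T.dist z b + 1 := by
      calc T.dist z a ≤ T.dist z b + T.dist b a := hT.isConnected.dist_triangle
        _ ≤ T.dist z b + 1 := by
            have : T.dist b a ≤ (SimpleGraph.Walk.cons hab.symm SimpleGraph.Walk.nil).length :=
              SimpleGraph.dist_le _
            simpa using this
    omega
  · left
    have : (P.concat hab).IsPath := isPath_concat P hab hP hb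
    have := path_length_eq_dist hT _ this
    rw [SimpleGraph.Walk.length_concat] at this
    omega

lemma tree_down_unique (hT : T.IsTree) (z : V) {a b b' : V} (hab : T.Adj a b)
    (hab' : T.Adj a b') (h : T.dist z b + 1 = T.dist z a) (h' : T.dist z b' + 1 = T.dist z a) :
    b = b' := by
  classical
  obtain ⟨P, hP, hPl⟩ := exists_geodesic_path hT.isConnected z a
  have key : ∀ c : V, T.Adj a c → T.dist z c + 1 = T.dist z a →
      c = P.getVert (T.dist z a - 1) := by
    intro c hac hc
    obtain ⟨Pc, hPc, hPcl⟩ := exists_geodesic_path hT.isConnected z c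
    have ha : a ∉ Pc.support := by
      intro ha
      have h1 : (Pc.takeUntil a ha).length = T.dist z a :=
        path_length_eq_dist hT _ (hPc.takeUntil ha)
      have h2 := Pc.length_takeUntil_le ha
      omega
    have hQ : (Pc.concat hac.symm).IsPath := isPath_concat Pc hac.symm hPc ha
    have hQP : Pc.concat hac.symm = P := by
      obtain ⟨Q, -, hQu⟩ := hT.existsUnique_path z a
      rw [hQu _ hQ, hQu P hP]
    have hc' : c = (Pc.concat hac.symm).getVert (T.dist z a - 1) := by
      have hl : T.dist z a - 1 = Pc.length := by omega
      rw [SimpleGraph.Walk.concat_eq_append, SimpleGraph.Walk.getVert_append, hl]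
      simp
    rw [hc', hQP]
  rw [key b hab h, key b' hab' h']

lemma geodesic_dist (hconn : T.Connected) :
    ∀ {a b : V} (W : T.Walk a b), W.length = T.dist a b →
      ∀ k, k ≤ W.length → T.dist (W.getVert k) b = W.length - k := by
  intro a b W
  induction W with
  | nil =>
    intro _ k hk
    have hk0 : k = 0 := by simpa using hk
    subst hk0
    simp [SimpleGraph.dist_self]
  | @cons p r q h W' ih =>
    intro hW k hk
    have hW'geo : W'.length = T.dist r q := by
      have h1 : T.dist r q ≤ W'.length := SimpleGraph.dist_le _
      have h2 : T.dist p q ≤ 1 + T.dist r q := by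
        calc T.dist p q ≤ T.dist p r + T.dist r q := hconn.dist_triangle
          _ ≤ 1 + T.dist r q := by
              have : T.dist p r ≤ (SimpleGraph.Walk.cons h SimpleGraph.Walk.nil).length :=
                SimpleGraph.dist_le _
              simp at this; omega
      simp only [SimpleGraph.Walk.length_cons] at hW
      omega
    match k with
    | 0 =>
      simp only [SimpleGraph.Walk.getVert_zero, Nat.sub_zero]
      omega
    | k + 1 =>
      simp only [SimpleGraph.Walk.getVert_cons_succ, SimpleGraph.Walk.length_cons]
      have := ih hW'geo k (by simp at hk; omega)
      omega

end Tree

/-! ### Realization basics -/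

variable {n : ℕ} {S : Finset (Fin n → ℤ)}

lemma exists_omega (hS : Realizable S) (i : Fin n) : ∃ w : {x // x ∈ S}, w.1 i = 0 := by
  obtain ⟨w, ⟨hw, hw0⟩, -⟩ := hS.2.1 i
  exact ⟨⟨w, hw⟩, hw0⟩

lemma omega_unique (hS : Realizable S) (i : Fin n) {w w' : {x // x ∈ S}}
    (h : w.1 i = 0) (h' : w'.1 i = 0) : w = w' := by
  obtain ⟨z, -, hz⟩ := hS.2.1 i
  have h1 := hz w.1 ⟨w.2, h⟩
  have h2 := hz w'.1 ⟨w'.2, h'⟩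
  exact Subtype.ext (h1.trans h2.symm)

lemma ne_coord {u v : {x // x ∈ S}} (h : u ≠ v) : ∃ i, u.1 i ≠ v.1 i := by
  by_contra hc
  push_neg at hc
  exact h (Subtype.ext (funext hc))

lemma adj_maxDiffOne (hS : Realizable S) {G : SimpleGraph {x // x ∈ S}}
    (hG : IsRealization S G) {u v : {x // x ∈ S}} (h : G.Adj u v) : maxDiffOne u.1 v.1 := by
  have hlip : ∀ i, |u.1 i - v.1 i| ≤ 1 := by
    intro i
    obtain ⟨w, hw⟩ := exists_omega hS i
    have hu := hG.2 u w i hw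
    have hv := hG.2 v w i hw
    have h1 : G.dist u w ≤ G.dist u v + G.dist v w := hG.1.dist_triangle
    have h2 : G.dist v w ≤ G.dist v u + G.dist u w := hG.1.dist_triangle
    have h3 : G.dist u v ≤ 1 := by
      have := SimpleGraph.dist_le (SimpleGraph.Walk.cons h SimpleGraph.Walk.nil)
      simpa using this
    have h4 : G.dist v u ≤ 1 := by
      have := SimpleGraph.dist_le (SimpleGraph.Walk.cons h.symm SimpleGraph.Walk.nil)
      simpa using this
    rw [abs_le]
    omega
  obtain ⟨i, hi⟩ := ne_coord h.ne
  refine ⟨hlip, i, ?_⟩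
  have h1 : |u.1 i - v.1 i| ≤ 1 := hlip i
  have h0 : u.1 i - v.1 i ≠ 0 := fun hc => hi (by omega)
  rcases abs_cases (u.1 i - v.1 i) with ⟨he, hp⟩ | ⟨he, hp⟩ <;> rw [he] <;> rw [he] at h1 <;> omega

lemma walk_lipschitz {G : SimpleGraph {x // x ∈ S}}
    (hlip : ∀ a b : {x // x ∈ S}, G.Adj a b → ∀ i, |a.1 i - b.1 i| ≤ 1)
    {u w : {x // x ∈ S}} (W : G.Walk u w) (i : Fin n) :
    |u.1 i - w.1 i| ≤ (W.length : ℤ) := by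
  induction W with
  | nil => simp
  | @cons a b c h W' ih =>
    have h1 := hlip a b h i
    simp only [SimpleGraph.Walk.length_cons]
    push_cast
    have h2 : |a.1 i - c.1 i| ≤ |a.1 i - b.1 i| + |b.1 i - c.1 i| := by
      have := abs_sub_le (a.1 i) (b.1 i) (c.1 i)
      simpa using this
    omega

lemma exists_descending_walk {G : SimpleGraph {x // x ∈ S}}
    (hstep : ∀ (z : {x // x ∈ S}) (i : Fin n), 0 < z.1 i →
      ∃ z', G.Adj z z' ∧ z'.1 i = z.1 i - 1) (i : Fin n) :
    ∀ (k : ℕ) (u : {x // x ∈ S}), u.1 i = k →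
      ∃ (w : {x // x ∈ S}) (W : G.Walk u w), w.1 i = 0 ∧ W.length = k := by
  intro k
  induction k with
  | zero => intro u hu; exact ⟨u, SimpleGraph.Walk.nil, by exact_mod_cast hu, rfl⟩
  | succ k ih =>
    intro u hu
    obtain ⟨z', hadj, hz'⟩ := hstep u i (by rw [hu]; positivity)
    obtain ⟨w, W, hw, hWl⟩ := ih z' (by rw [hz', hu]; push_cast; ring)
    exact ⟨w, SimpleGraph.Walk.cons hadj W, hw, by simp [hWl]⟩

lemma isRealization_of (hS : Realizable S) (i₀ : Fin n) {G : SimpleGraph {x // x ∈ S}}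
    (hlip : ∀ a b : {x // x ∈ S}, G.Adj a b → ∀ i, |a.1 i - b.1 i| ≤ 1)
    (hstep : ∀ (z : {x // x ∈ S}) (i : Fin n), 0 < z.1 i →
      ∃ z', G.Adj z z' ∧ z'.1 i = z.1 i - 1) :
    IsRealization S G := by
  have hnonneg : ∀ u : {x // x ∈ S}, ∀ i, 0 ≤ u.1 i := fun u i => (hS.1 u.1 u.2).1 i
  have hreach : ∀ u v : {x // x ∈ S}, G.Reachable u v := by
    intro u v
    obtain ⟨w1, W1, hw1, -⟩ :=
      exists_descending_walk hstep i₀ (u.1 i₀).toNat u (Int.toNat_of_nonneg (hnonneg u i₀)).symm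
    obtain ⟨w2, W2, hw2, -⟩ :=
      exists_descending_walk hstep i₀ (v.1 i₀).toNat v (Int.toNat_of_nonneg (hnonneg v i₀)).symm
    have : w1 = w2 := omega_unique hS i₀ hw1 hw2
    subst this
    exact ⟨W1.append W2.reverse⟩
  have hconn : G.Connected := by
    obtain ⟨w0, -⟩ := exists_omega hS i₀
    haveI : Nonempty {x // x ∈ S} := ⟨w0⟩
    exact SimpleGraph.Connected.mk (fun u v => hreach u v)
  refine ⟨hconn, ?_⟩
  intro u w i hw
  obtain ⟨w', W, hw', hWl⟩ :=
    exists_descending_walk hstep i (u.1 i).toNat u (Int.toNat_of_nonneg (hnonneg u i)).symm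
  have hww : w' = w := omega_unique hS i hw' hw
  rw [← hww]
  have hub : G.dist u w' ≤ (u.1 i).toNat := hWl ▸ SimpleGraph.dist_le W
  have hlb : u.1 i ≤ (G.dist u w' : ℤ) := by
    obtain ⟨P, hP⟩ := hconn.exists_walk_length_eq_dist u w'
    have := walk_lipschitz hlip P i
    rw [hP, hw'] at this
    rw [abs_le] at this
    omega
  have := hnonneg u i
  omega

/-! ### Tree realization structure -/

variable {T : SimpleGraph {x // x ∈ S}}

lemma adj_coord_pm (hS : Realizable S) (hT : T.IsTree) (hTr : IsRealization S T)
    {a b : {x // x ∈ S}} (hab : T.Adj a b) (i : Fin n) :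
    b.1 i = a.1 i + 1 ∨ b.1 i = a.1 i - 1 := by
  obtain ⟨w, hw⟩ := exists_omega hS i
  have da : (T.dist a w : ℤ) = a.1 i := hTr.2 a w i hw
  have db : (T.dist b w : ℤ) = b.1 i := hTr.2 b w i hw
  have ca : T.dist w a = T.dist a w := SimpleGraph.dist_comm
  have cb : T.dist w b = T.dist b w := SimpleGraph.dist_comm
  rcases tree_dist_adj hT w hab with h | h
  · left; omega
  · right; omega

lemma down_unique (hS : Realizable S) (hT : T.IsTree) (hTr : IsRealization S T)
    {a b c : {x // x ∈ S}} (hab : T.Adj a b) (hac : T.Adj a c) (i : Fin n)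
    (hb : b.1 i = a.1 i - 1) (hc : c.1 i = a.1 i - 1) : b = c := by
  obtain ⟨w, hw⟩ := exists_omega hS i
  have da : (T.dist a w : ℤ) = a.1 i := hTr.2 a w i hw
  have db : (T.dist b w : ℤ) = b.1 i := hTr.2 b w i hw
  have dc : (T.dist c w : ℤ) = c.1 i := hTr.2 c w i hw
  have ca : T.dist w a = T.dist a w := SimpleGraph.dist_comm
  have cb : T.dist w b = T.dist b w := SimpleGraph.dist_comm
  have cc : T.dist w c = T.dist c w := SimpleGraph.dist_comm
  exact tree_down_unique hT w hab hac (by omega) (by omega)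

lemma half_lemma (hS : Realizable S) (hT : T.IsTree) (hTr : IsRealization S T)
    {p q : {x // x ∈ S}} (h2 : 2 ≤ T.dist p q) (hmd : ∀ i, |p.1 i - q.1 i| ≤ 1) :
    ∃ r, T.Adj p r ∧ r.1 = p.1 - 1 ∧ T.dist r q + 1 = T.dist p q := by
  obtain ⟨W, hWp, hWl⟩ := exists_geodesic_path hT.isConnected p q
  have hlen : 2 ≤ W.length := by omega
  have hadj : T.Adj p (W.getVert 1) := by
    have := W.adj_getVert_succ (show 0 < W.length by omega)
    simpa [SimpleGraph.Walk.getVert_zero] using this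
  have hd1 : T.dist (W.getVert 1) q = W.length - 1 :=
    geodesic_dist hT.isConnected W hWl 1 (by omega)
  refine ⟨W.getVert 1, hadj, ?_, by omega⟩
  funext i
  have hpt : (p.1 - 1) i = p.1 i - 1 := by simp
  rw [hpt]
  rcases adj_coord_pm hS hT hTr hadj i with hup | hdown
  · exfalso
    obtain ⟨w, hw⟩ := exists_omega hS i
    have dict : ∀ a : {x // x ∈ S}, (T.dist w a : ℤ) = a.1 i := by
      intro a
      rw [SimpleGraph.dist_comm]
      exact hTr.2 a w i hw
    have grow : ∀ k, k + 1 ≤ W.length →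
        T.dist w (W.getVert (k + 1)) = T.dist w (W.getVert k) + 1 := by
      intro k
      induction k with
      | zero =>
        intro _
        simp only [Nat.zero_add, SimpleGraph.Walk.getVert_zero]
        have h0 : (T.dist w p : ℤ) = p.1 i := dict _
        have h1 : (T.dist w (W.getVert 1) : ℤ) = (W.getVert 1).1 i := dict _
        omega
      | succ k ih =>
        intro hk1
        have ihh := ih (by omega)
        have hadj2 : T.Adj (W.getVert (k + 1)) (W.getVert (k + 2)) :=
          W.adj_getVert_succ (by omega)
        have hadj1 : T.Adj (W.getVert (k + 1)) (W.getVert k) :=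
          (W.adj_getVert_succ (by omega)).symm
        rcases tree_dist_adj hT w hadj2 with h | h
        · exact h
        · exfalso
          have heq : W.getVert (k + 2) = W.getVert k :=
            tree_down_unique hT w hadj2 hadj1 h (by omega)
          have dq2 : T.dist (W.getVert (k + 2)) q = W.length - (k + 2) :=
            geodesic_dist hT.isConnected W hWl (k + 2) (by omega)
          have dq0 : T.dist (W.getVert k) q = W.length - k :=
            geodesic_dist hT.isConnected W hWl k (by omega)
          rw [heq, dq0] at dq2
          omega
    have total : ∀ k, k ≤ W.length →
        T.dist w (W.getVert k) = T.dist w (W.getVert 0) + k := by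
      intro k
      induction k with
      | zero => intro _; simp
      | succ k ih =>
        intro hk
        rw [grow k hk, ih (by omega)]
        omega
    have hfin := total W.length le_rfl
    rw [SimpleGraph.Walk.getVert_length, SimpleGraph.Walk.getVert_zero] at hfin
    have hq : (T.dist w q : ℤ) = q.1 i := dict q
    have hp : (T.dist w p : ℤ) = p.1 i := dict p
    have := hmd i
    rw [abs_le] at this
    omega
  · exact hdown

lemma chain_adj (hS : Realizable S) (hT : T.IsTree) (hTr : IsRealization S T)
    {z z' : {x // x ∈ S}} (h : z'.1 = z.1 - 1) (i₀ : Fin n) : T.Adj z z' := by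
  have hne : z ≠ z' := by
    intro he
    have := congrFun h i₀
    rw [← he] at this
    simp only [Pi.sub_apply, Pi.one_apply] at this
    omega
  by_contra hnadj
  have hd0 : 0 < T.dist z z' := hT.isConnected.pos_dist_of_ne hne
  have hd1 : T.dist z z' ≠ 1 := fun h1 => hnadj (SimpleGraph.dist_eq_one_iff_adj.mp h1)
  have hmd : ∀ i, |z.1 i - z'.1 i| ≤ 1 := by
    intro i
    have := congrFun h i
    simp only [Pi.sub_apply, Pi.one_apply] at this
    rw [this]
    simp
  obtain ⟨r, hr, hrv, -⟩ := half_lemma hS hT hTr (p := z) (q := z') (by omega) hmd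
  have : r = z' := Subtype.ext (by rw [hrv, h])
  exact hnadj (this ▸ hr)

lemma rec_descend (hS : Realizable S) (hT : T.IsTree) (hTr : IsRealization S T) (i₀ : Fin n) :
    ∀ (N : ℕ) (p q : {x // x ∈ S}), (p.1 i₀).toNat ≤ N →
      (∀ i, |p.1 i - q.1 i| ≤ 1) → p ≠ q →
      ∃ a b : {x // x ∈ S}, T.Adj a b ∧ a.1 - b.1 = p.1 - q.1 ∧
        ((a = p ∧ b = q) ∨ ((∃ a' : {x // x ∈ S}, a'.1 = a.1 + 1) ∧
          (∃ b' : {x // x ∈ S}, b'.1 = b.1 + 1))) := by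
  intro N
  induction N with
  | zero =>
    intro p q hN hmd hne
    by_cases hadj : T.Adj p q
    · exact ⟨p, q, hadj, rfl, Or.inl ⟨rfl, rfl⟩⟩
    · exfalso
      have hd0 : 0 < T.dist p q := hT.isConnected.pos_dist_of_ne hne
      have hd1 : T.dist p q ≠ 1 := fun h1 => hadj (SimpleGraph.dist_eq_one_iff_adj.mp h1)
      obtain ⟨r, -, hrv, -⟩ := half_lemma hS hT hTr (by omega) hmd
      have hr0 : 0 ≤ r.1 i₀ := (hS.1 r.1 r.2).1 i₀
      have hp0 : 0 ≤ p.1 i₀ := (hS.1 p.1 p.2).1 i₀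
      have := congrFun hrv i₀
      simp only [Pi.sub_apply, Pi.one_apply] at this
      omega
  | succ N ih =>
    intro p q hN hmd hne
    by_cases hadj : T.Adj p q
    · exact ⟨p, q, hadj, rfl, Or.inl ⟨rfl, rfl⟩⟩
    · have hd0 : 0 < T.dist p q := hT.isConnected.pos_dist_of_ne hne
      have hd1 : T.dist p q ≠ 1 := fun h1 => hadj (SimpleGraph.dist_eq_one_iff_adj.mp h1)
      obtain ⟨r, hpr, hrv, -⟩ := half_lemma hS hT hTr (by omega) hmd
      have hmd' : ∀ i, |q.1 i - p.1 i| ≤ 1 := fun i => by rw [abs_sub_comm]; exact hmd i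
      have h2' : 2 ≤ T.dist q p := by rw [SimpleGraph.dist_comm]; omega
      obtain ⟨s, hqs, hsv, -⟩ := half_lemma hS hT hTr h2' hmd'
      have hrs : r ≠ s := by
        intro he
        apply hne
        apply Subtype.ext
        have : p.1 - 1 = q.1 - 1 := by rw [← hrv, ← hsv, he]
        funext i
        have := congrFun this i
        simp only [Pi.sub_apply, Pi.one_apply] at this
        omega
      have hmd2 : ∀ i, |r.1 i - s.1 i| ≤ 1 := by
        intro i
        rw [hrv, hsv]
        have := hmd i
        simp only [Pi.sub_apply, Pi.one_apply]
        have h := hmd i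
        rw [abs_le] at h ⊢
        omega
      have hr0 : 0 ≤ r.1 i₀ := (hS.1 r.1 r.2).1 i₀
      have hrN : (r.1 i₀).toNat ≤ N := by
        have := congrFun hrv i₀
        simp only [Pi.sub_apply, Pi.one_apply] at this
        omega
      obtain ⟨a, b, hab, hdiff, hcase⟩ := ih r s hrN hmd2 hrs
      refine ⟨a, b, hab, ?_, ?_⟩
      · rw [hdiff, hrv, hsv]; ring
      · rcases hcase with ⟨ha, hb⟩ | ⟨ha, hb⟩
        · right
          refine ⟨⟨p, ?_⟩, ⟨q, ?_⟩⟩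
          · rw [ha, hrv]; ring
          · rw [hb, hsv]; ring
        · right; exact ⟨ha, hb⟩

lemma canonical_adj_tree_adj (hS : Realizable S) (hT : T.IsTree) (hTr : IsRealization S T)
    (hsep : ∀ x ∈ S, ∀ y ∈ S, ((x - 1) ∉ S ∧ (x + 1) ∈ S) → ((y - 1) ∉ S ∧ (y + 1) ∈ S) →
      x ≠ y → ∃ i : Fin n, 1 < |x i - y i|)
    {u v : {x // x ∈ S}} (hcadj : maxDiffOne u.1 v.1) : T.Adj u v := by
  obtain ⟨hmd, i₀, hi₀⟩ := hcadj
  have hne : u ≠ v := by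
    intro he
    rw [he] at hi₀
    simp at hi₀
  by_contra hnadj
  obtain ⟨a, b, hab, hdiff, hcase⟩ :=
    rec_descend hS hT hTr i₀ (u.1 i₀).toNat u v le_rfl hmd hne
  have hcase' : (∃ a' : {x // x ∈ S}, a'.1 = a.1 + 1) ∧
      (∃ b' : {x // x ∈ S}, b'.1 = b.1 + 1) := by
    rcases hcase with ⟨ha, hb⟩ | h
    · exact absurd (ha ▸ hb ▸ hab) hnadj
    · exact h
  obtain ⟨⟨a', ha'⟩, ⟨b', hb'⟩⟩ := hcase'
  have hdiffi : ∀ i, a.1 i - b.1 i = u.1 i - v.1 i := by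
    intro i
    have := congrFun hdiff i
    simpa using this
  have hpm : ∀ i, u.1 i - v.1 i = 1 ∨ u.1 i - v.1 i = -1 := by
    intro i
    rcases adj_coord_pm hS hT hTr hab i with h | h
    · right; have := hdiffi i; omega
    · left; have := hdiffi i; omega
  by_cases hall1 : ∀ i, u.1 i - v.1 i = 1
  · apply hnadj
    have : v.1 = u.1 - 1 := by
      funext i
      have := hall1 i
      simp only [Pi.sub_apply, Pi.one_apply]
      omega
    exact chain_adj hS hT hTr this i₀
  by_cases hallm : ∀ i, u.1 i - v.1 i = -1
  · apply hnadj
    have : u.1 = v.1 - 1 := by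
      funext i
      have := hallm i
      simp only [Pi.sub_apply, Pi.one_apply]
      omega
    exact (chain_adj hS hT hTr this i₀).symm
  push_neg at hall1 hallm
  obtain ⟨i1, hi1⟩ := hallm
  obtain ⟨i2, hi2⟩ := hall1
  have hi1' : u.1 i1 - v.1 i1 = 1 := by rcases hpm i1 with h | h; exact h; exact absurd h hi1
  have hi2' : u.1 i2 - v.1 i2 = -1 := by rcases hpm i2 with h | h; exact absurd h hi2; exact h
  -- a - 1 ∉ S
  have hxm : (a.1 - 1) ∉ S := by
    intro hmem
    have hadj_c : T.Adj a ⟨a.1 - 1, hmem⟩ := chain_adj hS hT hTr rfl i₀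
    have heq : b = (⟨a.1 - 1, hmem⟩ : {x // x ∈ S}) := by
      apply down_unique hS hT hTr hab hadj_c i1
      · have := hdiffi i1; omega
      · simp
    have := congrFun (congrArg Subtype.val heq) i2
    simp only [Pi.sub_apply, Pi.one_apply] at this
    have := hdiffi i2
    omega
  have hym : (b.1 - 1) ∉ S := by
    intro hmem
    have hadj_c : T.Adj b ⟨b.1 - 1, hmem⟩ := chain_adj hS hT hTr rfl i₀
    have heq : a = (⟨b.1 - 1, hmem⟩ : {x // x ∈ S}) := by
      apply down_unique hS hT hTr hab.symm hadj_c i2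
      · have := hdiffi i2; omega
      · simp
    have := congrFun (congrArg Subtype.val heq) i1
    simp only [Pi.sub_apply, Pi.one_apply] at this
    have := hdiffi i1
    omega
  have hxp : (a.1 + 1) ∈ S := ha' ▸ a'.2
  have hyp : (b.1 + 1) ∈ S := hb' ▸ b'.2
  have habne : a.1 ≠ b.1 := by
    intro he
    have := congrFun he i1
    have := hdiffi i1
    omega
  obtain ⟨i, hgt⟩ := hsep a.1 a.2 b.1 b.2 ⟨hxm, hxp⟩ ⟨hym, hyp⟩ habne
  have h1 : a.1 i - b.1 i = 1 ∨ a.1 i - b.1 i = -1 := by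
    have := hpm i
    have := hdiffi i
    omega
  rcases h1 with h | h <;> rw [h] at hgt <;> simp at hgt

end TUR

namespace TUR2
open TUR

variable {n : ℕ} {S : Finset (Fin n → ℤ)}

lemma forward (hS : Realizable S)
    (huniq : ∀ G : SimpleGraph {v // v ∈ S}, IsRealization S G → G = canonicalGraph S) :
    ∀ x ∈ S, ∀ y ∈ S, ((x - 1) ∉ S ∧ (x + 1) ∈ S) → ((y - 1) ∉ S ∧ (y + 1) ∈ S) →
      x ≠ y → ∃ i : Fin n, 1 < |x i - y i| := by
  intro x hx y hy hxc hyc hxy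
  by_contra hno
  push_neg at hno
  obtain ⟨i₀, hi₀⟩ : ∃ i, x i ≠ y i := by
    by_contra hc; push_neg at hc; exact hxy (funext hc)
  set X : {v // v ∈ S} := ⟨x + 1, hxc.2⟩ with hXdef
  set Y : {v // v ∈ S} := ⟨y + 1, hyc.2⟩ with hYdef
  have hXY : X ≠ Y := by
    intro he
    have h1 : x + 1 = y + 1 := congrArg Subtype.val he
    exact hxy (add_right_cancel h1)
  let G : SimpleGraph {v // v ∈ S} :=
    { Adj := fun a b => maxDiffOne a.1 b.1 ∧ ¬((a = X ∧ b = Y) ∨ (a = Y ∧ b = X)),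
      symm := by
        constructor
        rintro a b ⟨⟨h1, i, hi⟩, h2⟩
        exact ⟨⟨fun j => by rw [abs_sub_comm]; exact h1 j, i, by rwa [abs_sub_comm]⟩,
          fun hc => h2 (by tauto)⟩,
      loopless := by
        constructor
        rintro a ⟨⟨-, i, hi⟩, -⟩
        simp at hi }
  have hlip : ∀ a b : {v // v ∈ S}, G.Adj a b → ∀ i, |a.1 i - b.1 i| ≤ 1 :=
    fun a b hab i => hab.1.1 i
  have hstep : ∀ (z : {v // v ∈ S}) (i : Fin n), 0 < z.1 i →
      ∃ z', G.Adj z z' ∧ z'.1 i = z.1 i - 1 := by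
    intro z i hz
    obtain ⟨y₀, hy₀S, hy₀i, hy₀c⟩ := hS.2.2 z.1 z.2 i hz
    have hcanz : maxDiffOne z.1 y₀ := by
      refine ⟨fun j => by rw [abs_sub_comm]; exact hy₀c j, i, ?_⟩
      rw [hy₀i]
      simp
    by_cases hb1 : z = X ∧ (⟨y₀, hy₀S⟩ : {v // v ∈ S}) = Y
    · have hzv : z.1 = x + 1 := congrArg Subtype.val hb1.1
      refine ⟨⟨x, hx⟩, ⟨⟨fun j => ?_, i, ?_⟩, ?_⟩, ?_⟩
      · rw [hzv]; simp
      · rw [hzv]; simp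
      · rintro (⟨-, hXY'⟩ | ⟨hzY, -⟩)
        · have hxy1 : x = y + 1 := congrArg Subtype.val hXY'
          refine hxc.1 ?_
          rw [hxy1]
          simpa using hy
        · exact hXY (hb1.1.symm.trans hzY)
      · rw [hzv]; simp
    by_cases hb2 : z = Y ∧ (⟨y₀, hy₀S⟩ : {v // v ∈ S}) = X
    · have hzv : z.1 = y + 1 := congrArg Subtype.val hb2.1
      refine ⟨⟨y, hy⟩, ⟨⟨fun j => ?_, i, ?_⟩, ?_⟩, ?_⟩
      · rw [hzv]; simp
      · rw [hzv]; simp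
      · rintro (⟨hzX, -⟩ | ⟨-, hYX'⟩)
        · exact hXY (hzX.symm.trans hb2.1)
        · have hyx1 : y = x + 1 := congrArg Subtype.val hYX'
          refine hyc.1 ?_
          rw [hyx1]
          simpa using hx
      · rw [hzv]; simp
    · exact ⟨⟨y₀, hy₀S⟩, ⟨hcanz, fun hc => by tauto⟩, hy₀i⟩
  have hGr : IsRealization S G := isRealization_of hS i₀ hlip hstep
  have hGc := huniq G hGr
  have hcan : (canonicalGraph S).Adj X Y := by
    refine ⟨fun j => ?_, i₀, ?_⟩
    · show |(x + 1) j - (y + 1) j| ≤ 1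
      simpa using hno j
    · show |(x + 1) i₀ - (y + 1) i₀| = 1
      have h1 := hno i₀
      have h0 : x i₀ - y i₀ ≠ 0 := fun hc => hi₀ (by omega)
      have : (x + 1) i₀ - (y + 1) i₀ = x i₀ - y i₀ := by simp
      rw [this]
      rcases abs_cases (x i₀ - y i₀) with ⟨he, hp⟩ | ⟨he, hp⟩ <;> rw [he] <;>
        rw [he] at h1 <;> omega
  have hnG : ¬ G.Adj X Y := fun h => h.2 (Or.inl ⟨rfl, rfl⟩)
  rw [hGc] at hnG
  exact hnG hcan

theorem tree_uniquely_realizable_iff' {n : ℕ} (S : Finset (Fin n → ℤ))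
    (hS : Realizable S)
    (htree : ∃ T : SimpleGraph {v // v ∈ S}, T.IsTree ∧ IsRealization S T) :
    (∀ G : SimpleGraph {v // v ∈ S}, IsRealization S G → G = canonicalGraph S) ↔
      ∀ x ∈ S, ∀ y ∈ S, ((x - 1) ∉ S ∧ (x + 1) ∈ S) → ((y - 1) ∉ S ∧ (y + 1) ∈ S) →
        x ≠ y → ∃ i : Fin n, 1 < |x i - y i| := by
  constructor
  · intro huniq
    exact forward hS huniq
  · intro hsep G hGr
    obtain ⟨T, hT, hTr⟩ := htree
    have hTadj : ∀ a b : {v // v ∈ S}, maxDiffOne a.1 b.1 → T.Adj a b :=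
      fun a b h => canonical_adj_tree_adj hS hT hTr hsep h
    have hGT : ∀ a b : {v // v ∈ S}, G.Adj a b → T.Adj a b :=
      fun a b h => hTadj a b (adj_maxDiffOne hS hGr h)
    have hTG : ∀ a b : {v // v ∈ S}, T.Adj a b → G.Adj a b := by
      intro a b hab
      by_contra hn
      have hbr : T.IsBridge s(a, b) :=
        (SimpleGraph.isAcyclic_iff_forall_adj_isBridge.mp hT.2) hab
      rw [SimpleGraph.isBridge_iff] at hbr
      apply hbr
      have hle : G ≤ T \ SimpleGraph.fromEdgeSet {s(a, b)} := by
        intro c d hcd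
        rw [SimpleGraph.sdiff_adj]
        refine ⟨hGT c d hcd, ?_⟩
        rw [SimpleGraph.fromEdgeSet_adj]
        rintro ⟨hmem, -⟩
        simp only [Set.mem_singleton_iff, Sym2.eq, Sym2.rel_iff', Prod.mk.injEq,
          Prod.swap_prod_mk] at hmem
        rcases hmem with ⟨hc, hd⟩ | ⟨hc, hd⟩
        · subst hc; subst hd; exact hn hcd
        · subst hc; subst hd; exact hn hcd.symm
      exact SimpleGraph.Reachable.mono hle (hGr.1.preconnected a b)
    ext a b
    constructor
    · intro h
      exact adj_maxDiffOne hS hGr h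
    · intro h
      exact hTG a b (hTadj a b h)

end TUR2

/-- if `S` is realizable by a tree, then `S` is uniquely
realizable iff any two distinct elements of
`S₀* = {x ∈ S : x - 1 ∉ S ∧ x + 1 ∈ S}` satisfy `max_i |x i - y i| > 1`. -/
theorem tree_uniquely_realizable_iff {n : ℕ} (S : Finset (Fin n → ℤ))
    (hS : Realizable S)
    (htree : ∃ T : SimpleGraph {v // v ∈ S}, T.IsTree ∧ IsRealization S T) :
    (∀ G : SimpleGraph {v // v ∈ S}, IsRealization S G → G = canonicalGraph S) ↔
      ∀ x ∈ S, ∀ y ∈ S, ((x - 1) ∉ S ∧ (x + 1) ∈ S) → ((y - 1) ∉ S ∧ (y + 1) ∈ S) →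
        x ≠ y → ∃ i : Fin n, 1 < |x i - y i| :=
  TUR2.tree_uniquely_realizable_iff' S hS htree
end

section
/- Let S ⊂ ℤ^n be realizable satisfying: (i) for all x, y ∈ S with max_i |x_i − y_i| = 1, x_j ≠ y_j for all j; (ii) for every x ∈ S₀ and every j with x_j > 0 there is exactly one y ∈ S₀ with max_i |x_i − y_i| = 1 and y_j = x_j − 1, where S₀ = {x ∈ S : x − 1 ∉ S}. Then the subgraph of the canonical realization Ĝ induced by S₀ is a tree, and moreover induced distances agree: d_{Ĝ[S₀]}(x, y) = d_Ĝ(x, y) for all x, y ∈ S₀. -/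
namespace S0TreeAux

open SimpleGraph Walk

variable {n : ℕ} {S : Finset (Fin n → ℤ)}

abbrev S0 (S : Finset (Fin n → ℤ)) : Set {x // x ∈ S} := {x : {v // v ∈ S} | (x.1 - 1) ∉ S}

abbrev TT (S : Finset (Fin n → ℤ)) : SimpleGraph (S0 S) := (canonicalGraph S).induce (S0 S)

lemma sub_one_apply (x : Fin n → ℤ) (k : Fin n) : (x - 1) k = x k - 1 := rfl

lemma coord_step (hi : ∀ x ∈ S, ∀ y ∈ S, maxDiffOne x y → ∀ j, x j ≠ y j)
    {a b : Fin n → ℤ} (ha : a ∈ S) (hb : b ∈ S) (h : maxDiffOne a b) (k : Fin n) :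
    b k = a k - 1 ∨ b k = a k + 1 := by
  have h1 := abs_le.mp (h.1 k)
  have h2 := hi a ha b hb h k
  omega

lemma root_not_sub (hS : Realizable S) {w : Fin n → ℤ} (hw : w ∈ S) {i : Fin n}
    (h0 : w i = 0) : (w - 1) ∉ S := by
  intro hmem
  have := (hS.1 _ hmem).1 i
  rw [sub_one_apply, h0] at this
  omega

lemma descent (hS : Realizable S)
    (hii : ∀ x ∈ S, (x - 1) ∉ S → ∀ j : Fin n, 0 < x j →
      ∃! y : Fin n → ℤ, (y ∈ S ∧ (y - 1) ∉ S) ∧ maxDiffOne x y ∧ y j = x j - 1)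
    {i : Fin n} (w : S0 S) (hw0 : w.1.1 i = 0) :
    ∀ m : ℕ, ∀ a : S0 S, a.1.1 i = (m : ℤ) → ∃ p : (TT S).Walk a w, p.length = m := by
  intro m
  induction m with
  | zero =>
    intro a h0
    have hval : a.1.1 = w.1.1 := by
      obtain ⟨u, hu, huniq⟩ := hS.2.1 i
      have h1 : a.1.1 = u := huniq a.1.1 ⟨a.1.2, by exact_mod_cast h0⟩
      have h2 : w.1.1 = u := huniq w.1.1 ⟨w.1.2, hw0⟩
      rw [h1, h2]
    have : a = w := Subtype.ext (Subtype.ext hval)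
    subst this
    exact ⟨Walk.nil, rfl⟩
  | succ m ih =>
    intro a hm
    have hpos : 0 < a.1.1 i := by rw [hm]; positivity
    obtain ⟨z, ⟨⟨hzS, hz0⟩, hzadj, hzi⟩, -⟩ := hii a.1.1 a.1.2 a.2 i hpos
    have hb0 : (⟨z, hzS⟩ : {x // x ∈ S}) ∈ S0 S := hz0
    let b : S0 S := ⟨⟨z, hzS⟩, hb0⟩
    have hadj : (TT S).Adj a b := hzadj
    have hbi : b.1.1 i = (m : ℤ) := by
      show z i = (m : ℤ)
      rw [hzi, hm]; push_cast; ring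
    obtain ⟨p, hp⟩ := ih b hbi
    exact ⟨Walk.cons hadj p, by simp [hp]⟩

lemma walk_parity (hi : ∀ x ∈ S, ∀ y ∈ S, maxDiffOne x y → ∀ j, x j ≠ y j) :
    ∀ {a b : S0 S} (p : (TT S).Walk a b) (k : Fin n),
      ∃ t : ℤ, (p.length : ℤ) = a.1.1 k - b.1.1 k + 2 * t := by
  intro a b p k
  induction p with
  | nil => exact ⟨0, by simp⟩
  | @cons a' u' b' h q ih =>
    obtain ⟨t, ht⟩ := ih
    rcases coord_step hi a'.1.2 u'.1.2 h k with hc | hc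
    · exact ⟨t, by rw [Walk.length_cons]; push_cast; omega⟩
    · exact ⟨t + 1, by rw [Walk.length_cons]; push_cast; omega⟩

lemma gwalk_coord : ∀ {a b : {x // x ∈ S}} (p : (canonicalGraph S).Walk a b) (k : Fin n),
    |a.1 k - b.1 k| ≤ (p.length : ℤ) := by
  intro a b p k
  induction p with
  | nil => simp
  | @cons a' u' b' h q ih =>
    have h1 : |a'.1 k - u'.1 k| ≤ 1 := h.1 k
    refine le_trans (abs_sub_le _ (u'.1 k) _) ?_
    rw [Walk.length_cons]
    push_cast
    omega


lemma acyclic (hn : 0 < n) (hS : Realizable S)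
    (hi : ∀ x ∈ S, ∀ y ∈ S, maxDiffOne x y → ∀ j, x j ≠ y j)
    (hii : ∀ x ∈ S, (x - 1) ∉ S → ∀ j : Fin n, 0 < x j →
      ∃! y : Fin n → ℤ, (y ∈ S ∧ (y - 1) ∉ S) ∧ maxDiffOne x y ∧ y j = x j - 1) :
    (TT S).IsAcyclic := by
  classical
  intro v c hc
  set i0 : Fin n := ⟨0, hn⟩ with hi0def
  obtain ⟨x, hxmem, hxmax⟩ := (c.support.toFinset).exists_max_image
    (fun u => (u.1.1 i0).toNat) ⟨v, List.mem_toFinset.mpr c.start_mem_support⟩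
  have hx : x ∈ c.support := List.mem_toFinset.mp hxmem
  set c' := c.rotate x hx with hc'def
  have hcyc : c'.IsCycle := hc.rotate hx
  have hsub : ∀ u, u ∈ c'.support → u ∈ c.support := by
    intro u hu
    rw [Walk.support_eq_cons] at hu
    rcases List.mem_cons.mp hu with h | h
    · rw [h]; exact hx
    · have hrot := Walk.support_rotate c x hx
      exact List.mem_of_mem_tail (hrot.mem_iff.mp h)
  have hmax' : ∀ u, u ∈ c'.support → (u.1.1 i0).toNat ≤ (x.1.1 i0).toNat :=
    fun u hu => hxmax u (List.mem_toFinset.mpr (hsub u hu))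
  have hnil : ¬ c'.Nil := hcyc.not_nil
  have hlen3 : 3 ≤ c'.length := hcyc.three_le_length
  have hadjb : (TT S).Adj x (c'.getVert 1) := Walk.adj_snd (p := c') hnil
  set b := c'.getVert 1 with hbdef
  have hbmem : b ∈ c'.support := Walk.mem_support_iff_exists_getVert.mpr ⟨1, rfl, by omega⟩
  have hdec := c'.cons_tail_eq hnil
  have hcyc2 : (Walk.cons (Walk.adj_snd (p := c') hnil) c'.tail).IsCycle := by
    rw [hdec]; exact hcyc
  have htp : c'.tail.IsPath := ((Walk.cons_isCycle_iff _ _).mp hcyc2).1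
  have hxb : x ≠ b := hadjb.ne
  set qr := c'.tail.reverse with hqrdef
  have hqrp : qr.IsPath := htp.reverse
  have hqrnil : ¬ qr.Nil := Walk.not_nil_of_ne hxb
  have hadje : (TT S).Adj x (qr.getVert 1) := Walk.adj_snd (p := qr) hqrnil
  set e := qr.getVert 1 with hedef
  have hqrlen : qr.length + 1 = c'.length := by
    rw [hqrdef, Walk.length_reverse]; exact Walk.length_tail_add_one hnil
  have hemem : e ∈ c'.support := by
    have h1 : e ∈ qr.support := Walk.mem_support_iff_exists_getVert.mpr ⟨1, rfl, by omega⟩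
    rw [hqrdef, Walk.support_reverse, List.mem_reverse] at h1
    have h2 : e ∈ c'.support.tail := by
      rwa [Walk.support_tail_of_not_nil c' hnil] at h1
    exact List.mem_of_mem_tail h2
  have hbe : b ≠ e := by
    intro heq
    have hr : qr.tail.IsPath := hqrp.tail
    have heq2 : qr.getVert 1 = b := by rw [← hedef, ← heq]
    have hrp' : (qr.tail.copy heq2 rfl).IsPath := by rw [Walk.isPath_copy]; exact hr
    have hrnil : qr.tail.copy heq2 rfl = Walk.nil := Walk.isPath_iff_eq_nil.mp hrp'
    have hlr : qr.tail.length = 0 := by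
      have := congrArg Walk.length hrnil
      rw [Walk.length_copy] at this
      simpa using this
    have := Walk.length_tail_add_one hqrnil
    omega
  have hnnb : 0 ≤ b.1.1 i0 := (hS.1 _ b.1.2).1 i0
  have hnne : 0 ≤ e.1.1 i0 := (hS.1 _ e.1.2).1 i0
  have hnnx : 0 ≤ x.1.1 i0 := (hS.1 _ x.1.2).1 i0
  have hb1 : b.1.1 i0 = x.1.1 i0 - 1 := by
    rcases coord_step hi x.1.2 b.1.2 hadjb i0 with h | h
    · exact h
    · exfalso; have := hmax' b hbmem; omega
  have he1 : e.1.1 i0 = x.1.1 i0 - 1 := by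
    rcases coord_step hi x.1.2 e.1.2 hadje i0 with h | h
    · exact h
    · exfalso; have := hmax' e hemem; omega
  have hxpos : 0 < x.1.1 i0 := by omega
  have hbeval : b.1.1 = e.1.1 :=
    (hii x.1.1 x.1.2 x.2 i0 hxpos).unique ⟨⟨b.1.2, b.2⟩, hadjb, hb1⟩ ⟨⟨e.1.2, e.2⟩, hadje, he1⟩
  exact hbe (Subtype.ext (Subtype.ext hbeval))


lemma tree_unique_down (hconn : (TT S).Connected) (htree : (TT S).IsTree)
    {x y b c : S0 S} (hbc : b ≠ c)
    (hyb : (TT S).Adj y b) (hyc : (TT S).Adj y c)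
    (hdb : (TT S).dist x b + 1 = (TT S).dist x y)
    (hdc : (TT S).dist x c + 1 = (TT S).dist x y) : False := by
  classical
  obtain ⟨q1, hq1p, hq1l⟩ := hconn.exists_path_of_dist x b
  obtain ⟨q2, hq2p, hq2l⟩ := hconn.exists_path_of_dist x c
  have hy1 : y ∉ q1.support := by
    intro hy
    have h1 := SimpleGraph.dist_le (q1.takeUntil y hy)
    have h2 := q1.length_takeUntil_le hy
    omega
  have hy2 : y ∉ q2.support := by
    intro hy
    have h1 := SimpleGraph.dist_le (q2.takeUntil y hy)
    have h2 := q2.length_takeUntil_le hy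
    omega
  have hw1 : (q1.concat hyb.symm).IsPath := by
    have hrev : (q1.concat hyb.symm).reverse.IsPath := by
      rw [Walk.reverse_concat, Walk.cons_isPath_iff]
      exact ⟨hq1p.reverse, by rwa [Walk.support_reverse, List.mem_reverse]⟩
    have := hrev.reverse
    rwa [Walk.reverse_reverse] at this
  have hw2 : (q2.concat hyc.symm).IsPath := by
    have hrev : (q2.concat hyc.symm).reverse.IsPath := by
      rw [Walk.reverse_concat, Walk.cons_isPath_iff]
      exact ⟨hq2p.reverse, by rwa [Walk.support_reverse, List.mem_reverse]⟩
    have := hrev.reverse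
    rwa [Walk.reverse_reverse] at this
  have heq := (htree.existsUnique_path x y).unique hw1 hw2
  have hb : (q1.concat hyb.symm).reverse.getVert 1 = b := by
    rw [Walk.reverse_concat, Walk.getVert_cons_succ, Walk.getVert_zero]
  have hc : (q2.concat hyc.symm).reverse.getVert 1 = c := by
    rw [Walk.reverse_concat, Walk.getVert_cons_succ, Walk.getVert_zero]
  apply hbc
  rw [← hb, ← hc, heq]

lemma ascent (hS : Realizable S)
    (hi : ∀ x ∈ S, ∀ y ∈ S, maxDiffOne x y → ∀ j, x j ≠ y j)
    (hii : ∀ x ∈ S, (x - 1) ∉ S → ∀ j : Fin n, 0 < x j →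
      ∃! y : Fin n → ℤ, (y ∈ S ∧ (y - 1) ∉ S) ∧ maxDiffOne x y ∧ y j = x j - 1)
    (hconn : (TT S).Connected) (htree : (TT S).IsTree)
    (i : Fin n) (w : S0 S) (hw0 : w.1.1 i = 0) :
    ∀ m : ℕ, ∀ y x z : S0 S, y.1.1 i = (m : ℤ) → (TT S).Adj y z →
      z.1.1 i = y.1.1 i + 1 → (TT S).dist x z + 1 = (TT S).dist x y →
      ((TT S).dist x w : ℤ) = ((TT S).dist x y : ℤ) + (m : ℤ) := by
  intro m
  induction m with
  | zero =>
    intro y x z hy0 hadj hz hd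
    have hval : y.1.1 = w.1.1 := by
      obtain ⟨u, hu, huniq⟩ := hS.2.1 i
      have h1 : y.1.1 = u := huniq y.1.1 ⟨y.1.2, by exact_mod_cast hy0⟩
      have h2 : w.1.1 = u := huniq w.1.1 ⟨w.1.2, hw0⟩
      rw [h1, h2]
    have : y = w := Subtype.ext (Subtype.ext hval)
    rw [← this]
    simp
  | succ m ih =>
    intro y x z hym hadj hz hd
    have hpos : 0 < y.1.1 i := by rw [hym]; positivity
    obtain ⟨pp, ⟨⟨hpS, hp0⟩, hpadj, hpi⟩, -⟩ := hii y.1.1 y.1.2 y.2 i hpos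
    have hp0' : (⟨pp, hpS⟩ : {x // x ∈ S}) ∈ S0 S := hp0
    let pv : S0 S := ⟨⟨pp, hpS⟩, hp0'⟩
    have hadjp : (TT S).Adj y pv := hpadj
    have hpvi : pv.1.1 i = (m : ℤ) := by
      show pp i = (m : ℤ)
      rw [hpi, hym]; push_cast; ring
    have hzpv : z ≠ pv := by
      intro h
      have : z.1.1 i = pv.1.1 i := by rw [h]
      rw [hz, hym, hpvi] at this
      push_cast at this
      omega
    have hdypv : (TT S).dist y pv ≤ 1 := by
      have := SimpleGraph.dist_le (Walk.cons hadjp Walk.nil)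
      simpa using this
    have hdpvy : (TT S).dist pv y ≤ 1 := by
      have := SimpleGraph.dist_le (Walk.cons hadjp.symm Walk.nil)
      simpa using this
    have hd1 : (TT S).dist x pv ≤ (TT S).dist x y + 1 := by
      have ht := hconn.dist_triangle (u := x) (v := y) (w := pv)
      omega
    have hd2 : (TT S).dist x y ≤ (TT S).dist x pv + 1 := by
      have ht := hconn.dist_triangle (u := x) (v := pv) (w := y)
      omega
    have hdne : (TT S).dist x pv ≠ (TT S).dist x y := by
      intro heq
      obtain ⟨p1, hp1⟩ := hconn.exists_walk_length_eq_dist x y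
      obtain ⟨p2, hp2⟩ := hconn.exists_walk_length_eq_dist x pv
      obtain ⟨t1, ht1⟩ := walk_parity hi p1 i
      obtain ⟨t2, ht2⟩ := walk_parity hi p2 i
      rw [hp1, hym] at ht1
      rw [hp2, hpvi, heq] at ht2
      push_cast at ht1 ht2
      omega
    have hdne2 : ¬((TT S).dist x pv + 1 = (TT S).dist x y) := fun h =>
      tree_unique_down hconn htree hzpv hadj hadjp hd h
    have hdp : (TT S).dist x pv = (TT S).dist x y + 1 := by omega
    have hih := ih pv x y hpvi hadjp.symm
      (by rw [hym, hpvi]; push_cast; ring)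
      (by omega)
    rw [hih, hdp]
    push_cast
    ring


end S0TreeAux

/-- under conditions (i) and (ii) of the tree characterization,
the subgraph of the canonical realization induced by `S₀ = {x ∈ S : x - 1 ∉ S}`
is a tree, and distances in it agree with distances in `Ĝ`. -/
theorem induced_S0_tree {n : ℕ} (hn : 0 < n) (S : Finset (Fin n → ℤ))
    (hS : Realizable S)
    (hi : ∀ x ∈ S, ∀ y ∈ S, maxDiffOne x y → ∀ j, x j ≠ y j)
    (hii : ∀ x ∈ S, (x - 1) ∉ S → ∀ j : Fin n, 0 < x j →
      ∃! y : Fin n → ℤ, (y ∈ S ∧ (y - 1) ∉ S) ∧ maxDiffOne x y ∧ y j = x j - 1) :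
    ((canonicalGraph S).induce {x : {v // v ∈ S} | (x.1 - 1) ∉ S}).IsTree ∧
    ∀ x y : {x : {v // v ∈ S} | (x.1 - 1) ∉ S},
      ((canonicalGraph S).induce {x : {v // v ∈ S} | (x.1 - 1) ∉ S}).dist x y =
        (canonicalGraph S).dist x.1 y.1 := by
  classical
  open S0TreeAux SimpleGraph Walk in
  show (TT S).IsTree ∧ ∀ x y : S0 S, (TT S).dist x y = (canonicalGraph S).dist x.1 y.1
  have i0 : Fin n := ⟨0, hn⟩
  obtain ⟨w0, hw0, -⟩ := hS.2.1 i0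
  have hw0' : (⟨w0, hw0.1⟩ : {x // x ∈ S}) ∈ S0 S := root_not_sub hS hw0.1 hw0.2
  let r0 : S0 S := ⟨⟨w0, hw0.1⟩, hw0'⟩
  have hreach : ∀ a : S0 S, (TT S).Reachable a r0 := by
    intro a
    obtain ⟨p, -⟩ := descent hS hii r0 hw0.2 (a.1.1 i0).toNat a
      (Int.toNat_of_nonneg ((hS.1 a.1.1 a.1.2).1 i0)).symm
    exact ⟨p⟩
  have hconn : (TT S).Connected := by
    rw [SimpleGraph.connected_iff]
    exact ⟨fun a b => (hreach a).trans (hreach b).symm, ⟨r0⟩⟩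
  have hacyc : (TT S).IsAcyclic := acyclic hn hS hi hii
  have htree : (TT S).IsTree := ⟨hconn, hacyc⟩
  refine ⟨htree, ?_⟩
  intro x y
  by_cases hxy : x = y
  · subst hxy
    rw [SimpleGraph.dist_self, SimpleGraph.dist_self]
  · have hd1 : 0 < (TT S).dist x y := hconn.pos_dist_of_ne hxy
    obtain ⟨p, hp⟩ := hconn.exists_walk_length_eq_dist x y
    have hrevnil : ¬ p.reverse.Nil := Walk.not_nil_of_ne (fun h => hxy h.symm)
    have hadj : (TT S).Adj y (p.reverse.getVert 1) := Walk.adj_snd (p := p.reverse) hrevnil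
    set z := p.reverse.getVert 1 with hzdef
    have htl := Walk.length_tail_add_one hrevnil
    have hlrev : p.reverse.length = p.length := Walk.length_reverse p
    have h1 : (TT S).dist x z ≤ p.reverse.tail.length := by
      have := SimpleGraph.dist_le (p.reverse.tail.reverse)
      rwa [Walk.length_reverse] at this
    have h2 : (TT S).dist x y ≤ (TT S).dist x z + 1 := by
      have ht := hconn.dist_triangle (u := x) (v := z) (w := y)
      have hz1 : (TT S).dist z y ≤ 1 := by
        have := SimpleGraph.dist_le (Walk.cons hadj.symm Walk.nil)
        simpa using this
      omega
    have hzdist : (TT S).dist x z + 1 = (TT S).dist x y := by omega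
    have hexists : ∃ i, z.1.1 i = y.1.1 i + 1 := by
      by_contra hno
      push_neg at hno
      have hall : ∀ k, z.1.1 k = y.1.1 k - 1 := by
        intro k
        rcases coord_step hi y.1.2 z.1.2 hadj k with h | h
        · exact h
        · exact absurd h (hno k)
      have hzval : z.1.1 = y.1.1 - 1 := funext fun k => hall k
      exact y.2 (hzval ▸ z.1.2)
    obtain ⟨i, hzi⟩ := hexists
    obtain ⟨wi, hwi, -⟩ := hS.2.1 i
    have hwi' : (⟨wi, hwi.1⟩ : {x // x ∈ S}) ∈ S0 S := root_not_sub hS hwi.1 hwi.2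
    let ri : S0 S := ⟨⟨wi, hwi.1⟩, hwi'⟩
    have hynn : 0 ≤ y.1.1 i := (hS.1 y.1.1 y.1.2).1 i
    have hxnn : 0 ≤ x.1.1 i := (hS.1 x.1.1 x.1.2).1 i
    have hasc := ascent hS hi hii hconn htree i ri hwi.2 (y.1.1 i).toNat y x z
      (Int.toNat_of_nonneg hynn).symm hadj hzi hzdist
    rw [Int.toNat_of_nonneg hynn] at hasc
    have hdesc : ((TT S).dist x ri : ℤ) ≤ x.1.1 i := by
      obtain ⟨q, hq⟩ := descent hS hii ri hwi.2 (x.1.1 i).toNat x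
        (Int.toNat_of_nonneg hxnn).symm
      have hle := SimpleGraph.dist_le q
      rw [hq] at hle
      calc ((TT S).dist x ri : ℤ) ≤ ((x.1.1 i).toNat : ℤ) := by exact_mod_cast hle
        _ = x.1.1 i := Int.toNat_of_nonneg hxnn
    let emb : TT S ↪g canonicalGraph S := SimpleGraph.Embedding.induce (S0 S)
    have hembv : ∀ a : S0 S, emb.toHom a = a.1 := fun a => rfl
    have hGle : (canonicalGraph S).dist x.1 y.1 ≤ (TT S).dist x y := by
      have := SimpleGraph.dist_le (p.map emb.toHom)
      rwa [Walk.length_map, hp, hembv x, hembv y] at this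
    have hGreach : (canonicalGraph S).Reachable x.1 y.1 := by
      have : (canonicalGraph S).Reachable (emb.toHom x) (emb.toHom y) := ⟨p.map emb.toHom⟩
      rwa [hembv x, hembv y] at this
    obtain ⟨pg, hpg⟩ := hGreach.exists_walk_length_eq_dist
    have hGlb : (x.1.1 i - y.1.1 i : ℤ) ≤ ((canonicalGraph S).dist x.1 y.1 : ℤ) := by
      have habs := gwalk_coord pg i
      rw [hpg] at habs
      exact le_trans (le_abs_self _) habs
    have hchain : ((TT S).dist x y : ℤ) ≤ ((canonicalGraph S).dist x.1 y.1 : ℤ) := by omega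
    have : ((TT S).dist x y : ℤ) = ((canonicalGraph S).dist x.1 y.1 : ℤ) := by
      exact_mod_cast le_antisymm hchain (by exact_mod_cast hGle)
    exact_mod_cast this
end

section
/- Let S ⊂ ℤ^n be realizable and satisfy conditions (i) and (ii) of the tree characterization (with S₀ = {x ∈ S : x − 1 ∉ S}, S₁ = S \ S₀). Define the graph T with V(T) = S and E(T) = E(Ĝ[S₀]) ∪ {{y, y − 1} : y ∈ S₁}. Then |E(T)| = |S| − 1 and T is connected, hence T is a tree. -/
/-- The graph `T` with `V(T) = S` and
`E(T) = E(Ĝ[S₀]) ∪ {{y, y - 1} : y ∈ S₁}`, where `S₀ = {x ∈ S : x - 1 ∉ S}` and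
`S₁ = S \ S₀`. (The conjunct `a ≠ b` is redundant for `n ≥ 1`.) -/
def treeCandidate {n : ℕ} (S : Finset (Fin n → ℤ)) : SimpleGraph {x // x ∈ S} where
  Adj a b := a ≠ b ∧
    (((a.1 - 1) ∉ S ∧ (b.1 - 1) ∉ S ∧ maxDiffOne a.1 b.1) ∨
      b.1 = a.1 - 1 ∨ a.1 = b.1 - 1)
  symm := by
    constructor
    rintro a b ⟨hab, h | h | h⟩
    · exact ⟨hab.symm, Or.inl ⟨h.2.1, h.1, (canonicalGraph S).adj_symm (u := a) (v := b) h.2.2⟩⟩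
    · exact ⟨hab.symm, Or.inr (Or.inr h)⟩
    · exact ⟨hab.symm, Or.inr (Or.inl h)⟩
  loopless := ⟨fun a h => h.1 rfl⟩

/-- under conditions (i) and (ii) of the tree characterization,
the graph `T` has `|S| - 1` edges and is connected, hence is a tree. -/
theorem treeCandidate_isTree {n : ℕ} (hn : 0 < n) (S : Finset (Fin n → ℤ))
    (hS : Realizable S)
    (hi : ∀ x ∈ S, ∀ y ∈ S, maxDiffOne x y → ∀ j, x j ≠ y j)
    (hii : ∀ x ∈ S, (x - 1) ∉ S → ∀ j : Fin n, 0 < x j →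
      ∃! y : Fin n → ℤ, (y ∈ S ∧ (y - 1) ∉ S) ∧ maxDiffOne x y ∧ y j = x j - 1) :
    (treeCandidate S).edgeSet.ncard = S.card - 1 ∧
    (treeCandidate S).Connected ∧ (treeCandidate S).IsTree := by
  classical
  obtain ⟨h1, h2, _h3⟩ := hS
  set T := treeCandidate S with hT
  set j0 : Fin n := ⟨0, hn⟩ with hj0def
  obtain ⟨r0, ⟨hr0S, hr0z⟩, hr0u⟩ := h2 j0
  set r : {x // x ∈ S} := ⟨r0, hr0S⟩ with hrdef
  have hnn : ∀ v : {x // x ∈ S}, ∀ i, (0:ℤ) ≤ v.1 i := fun v i => (h1 v.1 v.2).1 i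
  have hroot : ∀ v : {x // x ∈ S}, v.1 j0 = 0 → v = r := fun v hv =>
    Subtype.ext (hr0u v.1 ⟨v.2, hv⟩)
  have hpos : ∀ v : {x // x ∈ S}, v ≠ r → 0 < v.1 j0 := by
    intro v hv
    rcases lt_or_eq_of_le (hnn v j0) with h | h
    · exact h
    · exact absurd (hroot v h.symm) hv
  have hsub : ∀ (x : Fin n → ℤ) (i : Fin n), (x - 1) i = x i - 1 := by
    intro x i; simp
  -- unique parent for every non-root vertex
  have hpar : ∀ v : {x // x ∈ S}, v ≠ r →
      ∃ w : {x // x ∈ S}, (T.Adj v w ∧ w.1 j0 = v.1 j0 - 1) ∧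
        ∀ w' : {x // x ∈ S}, T.Adj v w' → w'.1 j0 = v.1 j0 - 1 → w' = w := by
    intro v hv
    have hvpos := hpos v hv
    by_cases hv1 : (v.1 - 1) ∈ S
    · refine ⟨⟨v.1 - 1, hv1⟩, ⟨⟨?_, Or.inr (Or.inl rfl)⟩, hsub v.1 j0⟩, ?_⟩
      · intro h
        have := congrArg (fun z => z.1 j0) h
        simp only [hsub] at this
        omega
      · intro w' hadj hw'
        rcases hadj.2 with ⟨hc, _, _⟩ | hc | hc
        · exact absurd hv1 hc
        · exact Subtype.ext hc
        · exfalso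
          have := congrArg (fun z => z j0) hc
          simp only [hsub] at this
          omega
    · obtain ⟨y, ⟨⟨hyS, hy1⟩, hymax, hyj⟩, hyu⟩ := hii v.1 v.2 hv1 j0 hvpos
      refine ⟨⟨y, hyS⟩, ⟨⟨?_, Or.inl ⟨hv1, hy1, hymax⟩⟩, hyj⟩, ?_⟩
      · intro h
        have := congrArg (fun z => z.1 j0) h
        simp only at this
        omega
      · intro w' hadj hw'
        rcases hadj.2 with ⟨_, hw1, hwm⟩ | hc | hc
        · exact Subtype.ext (hyu w'.1 ⟨⟨w'.2, hw1⟩, hwm, hw'⟩)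
        · exact absurd (hc ▸ w'.2) hv1
        · exfalso
          have := congrArg (fun z => z j0) hc
          simp only [hsub] at this
          omega
  have hparFn : ∀ v : {x // x ∈ S}, ∃ w : {x // x ∈ S},
      (v ≠ r → (T.Adj v w ∧ w.1 j0 = v.1 j0 - 1) ∧
        ∀ w' : {x // x ∈ S}, T.Adj v w' → w'.1 j0 = v.1 j0 - 1 → w' = w) ∧
      (v = r → w = r) := by
    intro v
    by_cases hv : v = r
    · exact ⟨r, fun h => absurd hv h, fun _ => rfl⟩
    · obtain ⟨w, hw⟩ := hpar v hv
      exact ⟨w, fun _ => hw, fun h => absurd h hv⟩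
  choose p hp hprr using hparFn
  have hpadj : ∀ v, v ≠ r → T.Adj v (p v) := fun v hv => ((hp v hv).1).1
  have hpcoord : ∀ v, v ≠ r → (p v).1 j0 = v.1 j0 - 1 := fun v hv => ((hp v hv).1).2
  have hpuniq : ∀ v, v ≠ r → ∀ w', T.Adj v w' → w'.1 j0 = v.1 j0 - 1 → w' = p v :=
    fun v hv => (hp v hv).2
  -- every edge is a parent edge
  have hedgechar : ∀ a b, T.Adj a b → (a ≠ r ∧ b = p a) ∨ (b ≠ r ∧ a = p b) := by
    intro a b hadj
    have hdiff : a.1 j0 = b.1 j0 + 1 ∨ b.1 j0 = a.1 j0 + 1 := by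
      rcases hadj.2 with ⟨_, _, hm⟩ | hc | hc
      · have h1 := hm.1 j0
        have h2 := hi a.1 a.2 b.1 b.2 hm j0
        rw [abs_le] at h1
        omega
      · have := congrArg (fun z => z j0) hc
        simp only [hsub] at this
        omega
      · have := congrArg (fun z => z j0) hc
        simp only [hsub] at this
        omega
    rcases hdiff with hd | hd
    · have har : a ≠ r := by
        intro h
        have : a.1 j0 = 0 := h ▸ hr0z
        have := hnn b j0
        omega
      exact Or.inl ⟨har, hpuniq a har b hadj (by omega)⟩
    · have hbr : b ≠ r := by
        intro h
        have : b.1 j0 = 0 := h ▸ hr0z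
        have := hnn a j0
        omega
      exact Or.inr ⟨hbr, hpuniq b hbr a hadj.symm (by omega)⟩
  -- no vertex is a strict descendant of itself through p
  have hchain : ∀ (k : ℕ) (u : {x // x ∈ S}), (p^[k] u).1 j0 ≤ u.1 j0 := by
    intro k
    induction k with
    | zero => intro u; simp
    | succ k ih =>
      intro u
      rw [Function.iterate_succ_apply']
      by_cases h : p^[k] u = r
      · rw [h, hprr r rfl]
        have := ih u
        have : r.1 j0 = 0 := hr0z
        have := hnn u j0
        omega
      · have := hpcoord _ h
        have := ih u
        omega
  have hnotdesc : ∀ v : {x // x ∈ S}, v ≠ r → ¬ ∃ k, p^[k] (p v) = v := by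
    rintro v hv ⟨k, hk⟩
    have h1 := hchain k (p v)
    rw [hk] at h1
    have h2 := hpcoord v hv
    omega
  -- steps not using the parent edge of v preserve descendant-of-v status
  have hstep : ∀ (v a b : {x // x ∈ S}), T.Adj a b → ¬ s(a, b) = s(v, p v) →
      ((∃ k, p^[k] a = v) ↔ (∃ k, p^[k] b = v)) := by
    have key : ∀ (v a b : {x // x ∈ S}), a ≠ r → b = p a → ¬ s(a, b) = s(v, p v) →
        ((∃ k, p^[k] a = v) ↔ (∃ k, p^[k] b = v)) := by
      rintro v a b har rfl hne
      constructor
      · rintro ⟨k, hk⟩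
        match k, hk with
        | 0, hk =>
          exfalso
          apply hne
          simp only [Function.iterate_zero, id] at hk
          rw [hk]
        | (k+1), hk =>
          rw [Function.iterate_succ_apply] at hk
          exact ⟨k, hk⟩
      · rintro ⟨k, hk⟩
        exact ⟨k + 1, by rw [Function.iterate_succ_apply]; exact hk⟩
    intro v a b hadj hne
    rcases hedgechar a b hadj with ⟨har, hb⟩ | ⟨hbr, ha⟩
    · exact key v a b har hb hne
    · exact (key v b a hbr ha (by rwa [Sym2.eq_swap])).symm
  have hwalk : ∀ (v x y : {x // x ∈ S}) (w : T.Walk x y), s(v, p v) ∉ w.edges →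
      ((∃ k, p^[k] x = v) ↔ (∃ k, p^[k] y = v)) := by
    intro v x y w
    induction w with
    | nil => simp
    | @cons u c d h q ih =>
      intro he
      rw [SimpleGraph.Walk.edges_cons] at he
      simp only [List.mem_cons, not_or] at he
      exact (hstep v u c h (fun hh => he.1 hh.symm)).trans (ih he.2)
  -- every edge is a bridge
  have hbridge : ∀ e ∈ T.edgeSet, T.IsBridge e := by
    intro e he
    induction e with
    | h a b =>
      rw [SimpleGraph.mem_edgeSet] at he
      rw [SimpleGraph.isBridge_iff_adj_and_forall_walk_mem_edges]
      intro w
      by_contra hne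
      rcases hedgechar a b he with ⟨har, hb⟩ | ⟨hbr, ha⟩
      · subst hb
        have := (hwalk a a (p a) w hne).mp ⟨0, rfl⟩
        exact hnotdesc a har this
      · subst ha
        have := (hwalk b (p b) b w (by rwa [Sym2.eq_swap] at hne)).mpr ⟨0, rfl⟩
        exact hnotdesc b hbr this
  have hacyclic : T.IsAcyclic := SimpleGraph.isAcyclic_iff_forall_edge_isBridge.mpr hbridge
  -- connectivity
  have hreach : ∀ (k : ℕ) (v : {x // x ∈ S}), v.1 j0 ≤ (k : ℤ) → T.Reachable v r := by
    intro k
    induction k with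
    | zero =>
      intro v hv
      have : v = r := hroot v (le_antisymm (by exact_mod_cast hv) (hnn v j0))
      rw [this]
    | succ k ih =>
      intro v hv
      by_cases h : v = r
      · rw [h]
      · refine ((hpadj v h).reachable).trans (ih (p v) ?_)
        have := hpcoord v h
        omega
  have hconn : T.Connected := by
    haveI : Nonempty {x // x ∈ S} := ⟨r⟩
    refine SimpleGraph.Connected.mk fun a b => ?_
    have ha := hreach (a.1 j0).toNat a (by simp [Int.toNat_of_nonneg (hnn a j0)])
    have hb := hreach (b.1 j0).toNat b (by simp [Int.toNat_of_nonneg (hnn b j0)])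
    exact ha.trans hb.symm
  have htree : T.IsTree := ⟨hconn, hacyclic⟩
  haveI : Fintype ↥T.edgeSet := Fintype.ofFinite _
  have hcard := htree.card_edgeFinset
  rw [Fintype.card_coe] at hcard
  have hEcard : T.edgeSet.ncard = T.edgeFinset.card := by
    rw [Set.ncard_eq_toFinset_card' T.edgeSet]
    congr 1
  refine ⟨?_, hconn, htree⟩
  omega
end

section
/- In the 3SAT reduction of the BMETREL hardness proof, the bipartite graph G₀ with parts V₁ = {x_1,…,x_n, x̄_1,…,x̄_n} and V₂ = {r_1,…,r_n, c_1,…,c_m, s, t}, and edges r_i x_i, r_i x̄_i, s l and t l for all literals l, and c_j l for l ∈ C_j, realizes the constructed distance-vector set S with resolving set W = {r_1,…,r_n, c_1,…,c_m, s}: i.e., for every vertex u of G₀ its distance vector with respect to W equals the prescribed vector δ(·, u). -/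
/-- Vertices of the graph `G₀` of the 3SAT reduction: literals `(i, b)`
(variables `x_i` and negations `x̄_i`), together with `r_i` (`i ∈ [n]`),
`c_j` (`j ∈ [m]`), and `s`, `t` (encoded as `false`, `true`). -/
abbrev RedVtx (n m : ℕ) : Type := (Fin n × Bool) ⊕ (Fin n ⊕ (Fin m ⊕ Bool))

/-- Coordinate indices: one for each `r_i`, each `c_j`, and one for `s`. -/
abbrev RedIdx (n m : ℕ) : Type := Fin n ⊕ (Fin m ⊕ Unit)

/-- The vertex of `W = {r_1,…,r_n, c_1,…,c_m, s}` carrying each coordinate. -/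
def redW {n m : ℕ} : RedIdx n m → RedVtx n m
  | Sum.inl i => Sum.inr (Sum.inl i)
  | Sum.inr (Sum.inl j) => Sum.inr (Sum.inr (Sum.inl j))
  | Sum.inr (Sum.inr _) => Sum.inr (Sum.inr (Sum.inr false))

/-- The prescribed distance table `δ(w, u)` of the reduction, for `w ∈ W`. -/
def redDelta {n m : ℕ} (C : Fin m → Finset (Fin n × Bool)) :
    RedIdx n m → RedVtx n m → ℕ
  | Sum.inl i, Sum.inl l => if l.1 = i then 1 else 3
  | Sum.inl i, Sum.inr (Sum.inl p) => if p = i then 0 else 4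
  | Sum.inl i, Sum.inr (Sum.inr (Sum.inl j)) =>
      if i ∈ (C j).image Prod.fst then 2 else 4
  | Sum.inl _, Sum.inr (Sum.inr (Sum.inr _)) => 2
  | Sum.inr (Sum.inl j), Sum.inl l => if l ∈ C j then 1 else 3
  | Sum.inr (Sum.inl j), Sum.inr (Sum.inl i) =>
      if i ∈ (C j).image Prod.fst then 2 else 4
  | Sum.inr (Sum.inl j), Sum.inr (Sum.inr (Sum.inl p)) =>
      if p = j then 0 else if (C j ∩ C p).Nonempty then 2 else 4
  | Sum.inr (Sum.inl _), Sum.inr (Sum.inr (Sum.inr _)) => 2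
  | Sum.inr (Sum.inr _), Sum.inl _ => 1
  | Sum.inr (Sum.inr _), Sum.inr (Sum.inl _) => 2
  | Sum.inr (Sum.inr _), Sum.inr (Sum.inr (Sum.inl _)) => 2
  | Sum.inr (Sum.inr _), Sum.inr (Sum.inr (Sum.inr b)) => if b then 2 else 0

/-- Half of the adjacency of `G₀`: a literal `l` is joined to `r_i` iff `l` is a
literal of variable `i`, to `c_j` iff `l ∈ C_j`, and to both `s` and `t`. -/
def redE {n m : ℕ} (C : Fin m → Finset (Fin n × Bool)) :
    RedVtx n m → RedVtx n m → Prop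
  | Sum.inl l, Sum.inr (Sum.inl i) => l.1 = i
  | Sum.inl l, Sum.inr (Sum.inr (Sum.inl j)) => l ∈ C j
  | Sum.inl _, Sum.inr (Sum.inr (Sum.inr _)) => True
  | _, _ => False

/-- The bipartite graph `G₀` of the 3SAT reduction. -/
def redGraph {n m : ℕ} (C : Fin m → Finset (Fin n × Bool)) :
    SimpleGraph (RedVtx n m) where
  Adj u v := redE C u v ∨ redE C v u
  symm := ⟨fun _ _ h => h.symm⟩
  loopless := ⟨by
    rintro (l | (i | (j | b))) (h | h) <;> simp [redE] at h⟩

section Aux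
open Sum SimpleGraph

variable {n m : ℕ} (C : Fin m → Finset (Fin n × Bool))

lemma red_adj_lr (l : Fin n × Bool) (i : Fin n) (h : l.1 = i) :
    (redGraph C).Adj (inl l) (inr (inl i)) := Or.inl h

lemma red_adj_lc {l : Fin n × Bool} {j : Fin m} (h : l ∈ C j) :
    (redGraph C).Adj (inl l) (inr (inr (inl j))) := Or.inl h

lemma red_adj_ls (l : Fin n × Bool) (b : Bool) :
    (redGraph C).Adj (inl l) (inr (inr (inr b))) := Or.inl trivial

lemma red_lip (q : RedIdx n m) {u v : RedVtx n m}
    (h : (redGraph C).Adj u v) :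
    redDelta C q u ≤ redDelta C q v + 1 := by
  have key : ∀ (l : Fin n × Bool) (w : RedVtx n m), redE C (Sum.inl l) w →
      redDelta C q (Sum.inl l) ≤ redDelta C q w + 1 ∧
      redDelta C q w ≤ redDelta C q (Sum.inl l) + 1 := by
    rintro l (l' | (i | (j | b))) h
    · simp [redE] at h
    · -- r-edge, h : l.1 = i
      have h' : l.1 = i := h
      subst h'
      rcases q with qi | (qj | _)
      · simp only [redDelta]; split_ifs <;> omega
      · simp only [redDelta]
        split_ifs with h1 h2 h2 <;>
          first
            | omega
            | exact absurd (Finset.mem_image_of_mem Prod.fst h1) h2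
      · simp only [redDelta]; omega
    · -- c-edge, h : l ∈ C j
      have h' : l ∈ C j := h
      rcases q with qi | (qj | _)
      · simp only [redDelta]
        split_ifs with h1 h2 h2 <;>
          first
            | omega
            | exact absurd (h1 ▸ Finset.mem_image_of_mem Prod.fst h') h2
      · simp only [redDelta]
        by_cases h1 : l ∈ C qj
        · by_cases h2 : j = qj
          · simp [h1, h2]
          · have hne : (C qj ∩ C j).Nonempty := ⟨l, Finset.mem_inter.2 ⟨h1, h'⟩⟩
            simp [h1, h2, hne]
        · by_cases h2 : j = qj
          · exact absurd (h2 ▸ h') h1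
          · simp only [if_neg h1, if_neg h2]; split_ifs <;> omega
      · simp only [redDelta]; omega
    · rcases q with qi | (qj | _) <;> simp only [redDelta] <;>
        split_ifs <;> omega
  rcases h with h | h
  · rcases u with l | w
    · exact (key l v h).1
    · rcases v with l' | w' <;> simp [redE] at h
  · rcases v with l | w
    · exact (key l u h).2
    · rcases u with l' | w' <;> simp [redE] at h

lemma red_delta_self (q : RedIdx n m) : redDelta C q (redW q) = 0 := by
  rcases q with qi | (qj | _) <;> simp [redDelta, redW]

lemma red_lower (q : RedIdx n m) : ∀ {u v : RedVtx n m}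
    (p : (redGraph C).Walk u v),
    redDelta C q u ≤ redDelta C q v + p.length := by
  intro u v p
  induction p with
  | nil => simp
  | cons h p ih =>
    have := red_lip C q h
    simp only [SimpleGraph.Walk.length_cons]
    omega

lemma red_dist_eq (q : RedIdx n m) (u : RedVtx n m)
    (p : (redGraph C).Walk u (redW q))
    (hp : p.length = redDelta C q u) :
    (redGraph C).dist u (redW q) = redDelta C q u := by
  refine le_antisymm (hp ▸ SimpleGraph.dist_le p) ?_
  obtain ⟨p', hp'⟩ := p.reachable.exists_walk_length_eq_dist
  have := red_lower C q p'
  rw [red_delta_self] at this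
  omega

end Aux

/-- in the 3SAT reduction (with every clause having 1 to 3
literals and every variable sharing some clause with another variable), the
graph `G₀` realizes the constructed set `S` with resolving set
`W = {r_1,…,r_n, c_1,…,c_m, s}`: the distance in `G₀` from any vertex `u` to
each vertex of `W` equals the prescribed value `δ(·, u)`. -/
theorem redGraph_realizes {n m : ℕ} (hn : 0 < n)
    (C : Fin m → Finset (Fin n × Bool))
    (hC : ∀ j, (C j).Nonempty ∧ (C j).card ≤ 3)
    (hvar : ∀ i : Fin n, ∃ (j : Fin m) (l l' : Fin n × Bool),
      l ∈ C j ∧ l' ∈ C j ∧ l.1 = i ∧ l'.1 ≠ i) :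
    ∀ (u : RedVtx n m) (q : RedIdx n m),
      (redGraph C).dist u (redW q) = redDelta C q u := by
  open Sum SimpleGraph.Walk in
  rintro (l | (p | (j | b))) (qi | (qj | un))
  -- 1. literal, r_qi
  · by_cases h : l.1 = qi
    · exact red_dist_eq C _ _ (cons (red_adj_lr C l qi h) nil)
        (by simp [redDelta, h]; rfl)
    · exact red_dist_eq C _ _
        (cons (red_adj_ls C l false)
          (cons ((red_adj_ls C (qi, true) false).symm)
            (cons (red_adj_lr C (qi, true) qi rfl) nil)))
        (by simp [redDelta, h]; rfl)
  -- 2. literal, c_qj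
  · by_cases h : l ∈ C qj
    · exact red_dist_eq C _ _ (cons (red_adj_lc C h) nil)
        (by simp [redDelta, h]; rfl)
    · obtain ⟨l', hl'⟩ := (hC qj).1
      exact red_dist_eq C _ _
        (cons (red_adj_ls C l false)
          (cons ((red_adj_ls C l' false).symm)
            (cons (red_adj_lc C hl') nil)))
        (by simp [redDelta, h]; rfl)
  -- 3. literal, s
  · exact red_dist_eq C _ _ (cons (red_adj_ls C l false) nil)
      (by simp [redDelta, redW])
  -- 4. r_p, r_qi
  · by_cases h : p = qi
    · subst h
      exact red_dist_eq C _ _ nil (by simp [redDelta]; rfl)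
    · exact red_dist_eq C _ _
        (cons ((red_adj_lr C (p, true) p rfl).symm)
          (cons (red_adj_ls C (p, true) false)
            (cons ((red_adj_ls C (qi, true) false).symm)
              (cons (red_adj_lr C (qi, true) qi rfl) nil))))
        (by simp [redDelta, h]; rfl)
  -- 5. r_p, c_qj
  · by_cases h : p ∈ (C qj).image Prod.fst
    · obtain ⟨l, hl, hl1⟩ := Finset.mem_image.1 h
      exact red_dist_eq C _ _
        (cons ((red_adj_lr C l p hl1).symm) (cons (red_adj_lc C hl) nil))
        (by simp [redDelta, h]; rfl)
    · obtain ⟨l', hl'⟩ := (hC qj).1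
      exact red_dist_eq C _ _
        (cons ((red_adj_lr C (p, true) p rfl).symm)
          (cons (red_adj_ls C (p, true) false)
            (cons ((red_adj_ls C l' false).symm)
              (cons (red_adj_lc C hl') nil))))
        (by simp [redDelta, h]; rfl)
  -- 6. r_p, s
  · exact red_dist_eq C _ _
      (cons ((red_adj_lr C (p, true) p rfl).symm)
        (cons (red_adj_ls C (p, true) false) nil))
      (by simp [redDelta, redW])
  -- 7. c_j, r_qi
  · by_cases h : qi ∈ (C j).image Prod.fst
    · obtain ⟨l, hl, hl1⟩ := Finset.mem_image.1 h
      exact red_dist_eq C _ _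
        (cons ((red_adj_lc C hl).symm) (cons (red_adj_lr C l qi hl1) nil))
        (by simp [redDelta, h]; rfl)
    · obtain ⟨l', hl'⟩ := (hC j).1
      exact red_dist_eq C _ _
        (cons ((red_adj_lc C hl').symm)
          (cons (red_adj_ls C l' false)
            (cons ((red_adj_ls C (qi, true) false).symm)
              (cons (red_adj_lr C (qi, true) qi rfl) nil))))
        (by simp [redDelta, h]; rfl)
  -- 8. c_j, c_qj
  · by_cases h : j = qj
    · subst h
      exact red_dist_eq C _ _ nil (by simp [redDelta]; rfl)
    · by_cases h2 : (C qj ∩ C j).Nonempty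
      · obtain ⟨l, hl⟩ := h2
        have hl1 := (Finset.mem_inter.1 hl).1
        have hl2 := (Finset.mem_inter.1 hl).2
        exact red_dist_eq C _ _
          (cons ((red_adj_lc C hl2).symm) (cons (red_adj_lc C hl1) nil))
          (by
            have hne : (C qj ∩ C j).Nonempty := ⟨l, Finset.mem_inter.2 ⟨hl1, hl2⟩⟩
            simp [redDelta, h, hne]; rfl)
      · obtain ⟨l1, hl1⟩ := (hC j).1
        obtain ⟨l2, hl2⟩ := (hC qj).1
        exact red_dist_eq C _ _
          (cons ((red_adj_lc C hl1).symm)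
            (cons (red_adj_ls C l1 false)
              (cons ((red_adj_ls C l2 false).symm)
                (cons (red_adj_lc C hl2) nil))))
          (by simp [redDelta, h, h2]; rfl)
  -- 9. c_j, s
  · obtain ⟨l, hl⟩ := (hC j).1
    exact red_dist_eq C _ _
      (cons ((red_adj_lc C hl).symm) (cons (red_adj_ls C l false) nil))
      (by simp [redDelta, redW])
  -- 10. s/t, r_qi
  · exact red_dist_eq C _ _
      (cons ((red_adj_ls C (qi, true) b).symm)
        (cons (red_adj_lr C (qi, true) qi rfl) nil))
      (by simp [redDelta]; rfl)
  -- 11. s/t, c_qj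
  · obtain ⟨l, hl⟩ := (hC qj).1
    exact red_dist_eq C _ _
      (cons ((red_adj_ls C l b).symm) (cons (red_adj_lc C hl) nil))
      (by simp [redDelta]; rfl)
  -- 12. s/t, s
  · cases b
    · exact red_dist_eq C _ _ nil (by simp [redDelta, redW])
    · exact red_dist_eq C _ _
        (cons ((red_adj_ls C (⟨0, hn⟩, true) true).symm)
          (cons (red_adj_ls C (⟨0, hn⟩, true) false) nil))
        (by simp [redDelta, redW])
end
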